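/- arXiv:1011.6612 — 7 statements merged into one kernel-verified Lean document; each statement's English description precedes it below -/
import Mathlib

section
/- Every 2-by-2 minor of the infinite matrix X(i,j) = C(j, i-j) is nonnegative: for i < i' and j < j', C(j, i-j)*C(j', i'-j') - C(j', i-j')*C(j, i'-j) ≥ 0. -/
/-- Binomial coefficient `C(n,k)` extended by `0` when `k < 0` or `k > n`. -/
def Cz (n k : ℤ) : ℤ := if 0 ≤ k ∧ k ≤ n then (n.toNat.choose k.toNat : ℤ) else 0

lemma Cz_nonneg (n k : ℤ) : 0 ≤ Cz n k := by
  unfold Cz; split <;> positivity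

lemma Cz_natCast (n k : ℕ) (h : k ≤ n) : Cz n k = (n.choose k : ℤ) := by
  unfold Cz
  rw [if_pos ⟨Int.ofNat_nonneg k, by exact_mod_cast h⟩]
  simp

lemma step_ineq (j s m : ℕ) (h : m + s + 1 ≤ j) :
    (j+s).choose m * j.choose (m+s+1) ≤ j.choose (m+s) * (j+s).choose (m+1) := by
  have h1 := Nat.choose_succ_right_eq j (m+s)
  have h2 := Nat.choose_succ_right_eq (j+s) m
  have key : (j - (m+s)) * (m+1) ≤ (j+s-m) * (m+s+1) :=
    Nat.mul_le_mul (by omega) (by omega)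
  have main : (j+s).choose m * j.choose (m+s+1) * ((m+s+1)*(m+1))
      ≤ j.choose (m+s) * (j+s).choose (m+1) * ((m+s+1)*(m+1)) := by
    calc (j+s).choose m * j.choose (m+s+1) * ((m+s+1)*(m+1))
        = (j+s).choose m * (j.choose (m+s+1) * (m+s+1)) * (m+1) := by ring
      _ = (j+s).choose m * (j.choose (m+s) * (j-(m+s))) * (m+1) := by rw [h1]
      _ = (j+s).choose m * j.choose (m+s) * ((j-(m+s)) * (m+1)) := by ring
      _ ≤ (j+s).choose m * j.choose (m+s) * ((j+s-m) * (m+s+1)) :=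
          Nat.mul_le_mul_left _ key
      _ = j.choose (m+s) * ((j+s).choose m * (j+s-m)) * (m+s+1) := by ring
      _ = j.choose (m+s) * ((j+s).choose (m+1) * (m+1)) * (m+s+1) := by rw [h2]
      _ = j.choose (m+s) * (j+s).choose (m+1) * ((m+s+1)*(m+1)) := by ring
  exact Nat.le_of_mul_le_mul_right main (by positivity)

lemma chain_ineq (j s c t : ℕ) (h : c + s + t ≤ j) :
    (j+s).choose c * j.choose (c+s+t) ≤ j.choose (c+s) * (j+s).choose (c+t) := by
  induction t with
  | zero => simp [Nat.add_zero, mul_comm]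
  | succ t ih =>
    have h' : c + s + t ≤ j := by omega
    have ih' := ih h'
    have st := step_ineq j s (c+t) (by omega)
    have hD : 0 < j.choose (c+s+t) := Nat.choose_pos (by omega)
    have hE : 0 < (j+s).choose (c+t) := Nat.choose_pos (by omega)
    have comb : (j+s).choose c * j.choose (c+s+t+1) * (j.choose (c+s+t) * (j+s).choose (c+t))
        ≤ j.choose (c+s) * (j+s).choose (c+t+1) * (j.choose (c+s+t) * (j+s).choose (c+t)) := by
      have := Nat.mul_le_mul ih' st
      calc (j+s).choose c * j.choose (c+s+t+1) * (j.choose (c+s+t) * (j+s).choose (c+t))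
          = ((j+s).choose c * j.choose (c+s+t)) * ((j+s).choose (c+t) * j.choose (c+t+s+1)) := by
            ring_nf
        _ ≤ (j.choose (c+s) * (j+s).choose (c+t)) * (j.choose (c+t+s) * (j+s).choose (c+t+1)) := by
            have e2 : c+t+s = c+s+t := by ring
            simp only [e2] at this ⊢; exact this
        _ = j.choose (c+s) * (j+s).choose (c+t+1) * (j.choose (c+s+t) * (j+s).choose (c+t)) := by
            have e2 : c+t+s = c+s+t := by ring
            rw [e2]; ring
    have := Nat.le_of_mul_le_mul_right
      (by
        have hpos : 0 < j.choose (c+s+t) * (j+s).choose (c+t) := Nat.mul_pos hD hE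
        exact comb) (Nat.mul_pos hD hE)
    simpa [Nat.add_assoc] using this

theorem minor2_nonneg_X (i i' j j' : ℕ) (hi : i < i') (hj : j < j') :
    0 ≤ Cz j ((i : ℤ) - j) * Cz j' ((i' : ℤ) - j')
        - Cz j' ((i : ℤ) - j') * Cz j ((i' : ℤ) - j) := by
  by_cases h1 : 0 ≤ (i : ℤ) - j' ∧ (i : ℤ) - j' ≤ j'
  · by_cases h2 : 0 ≤ (i' : ℤ) - j ∧ (i' : ℤ) - j ≤ j
    · obtain ⟨h1a, h1b⟩ := h1
      obtain ⟨h2a, h2b⟩ := h2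
      -- key nat facts
      have hji : j' ≤ i := by omega
      have hii : i ≤ 2 * j := by omega
      have e1 : (i : ℤ) - j = ((i - j : ℕ) : ℤ) := by omega
      have e2 : (i' : ℤ) - j' = ((i' - j' : ℕ) : ℤ) := by omega
      have e3 : (i : ℤ) - j' = ((i - j' : ℕ) : ℤ) := by omega
      have e4 : (i' : ℤ) - j = ((i' - j : ℕ) : ℤ) := by omega
      rw [e1, e2, e3, e4,
        Cz_natCast j (i - j) (by omega),
        Cz_natCast j' (i' - j') (by omega),
        Cz_natCast j' (i - j') (by omega),
        Cz_natCast j (i' - j) (by omega)]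
      rw [sub_nonneg]
      have key := chain_ineq j (j' - j) (i - j') (i' - i) (by omega)
      have a1 : j + (j' - j) = j' := by omega
      have a2 : i - j' + (j' - j) + (i' - i) = i' - j := by omega
      have a3 : i - j' + (j' - j) = i - j := by omega
      have a4 : i - j' + (i' - i) = i' - j' := by omega
      rw [a1, a2, a3, a4] at key
      calc ((j'.choose (i - j') : ℤ)) * (j.choose (i' - j))
          = ((j'.choose (i - j') * j.choose (i' - j) : ℕ) : ℤ) := by push_cast; ring
        _ ≤ ((j.choose (i - j) * j'.choose (i' - j') : ℕ) : ℤ) := by exact_mod_cast key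
        _ = (j.choose (i - j) : ℤ) * (j'.choose (i' - j')) := by push_cast; ring
    · have : Cz j ((i' : ℤ) - j) = 0 := by unfold Cz; rw [if_neg]; exact_mod_cast h2
      rw [this, mul_zero, sub_zero]
      exact mul_nonneg (Cz_nonneg _ _) (Cz_nonneg _ _)
  · have : Cz j' ((i : ℤ) - j') = 0 := by unfold Cz; rw [if_neg]; exact_mod_cast h1
    rw [this, zero_mul, sub_zero]
    exact mul_nonneg (Cz_nonneg _ _) (Cz_nonneg _ _)
end

section
/- Every 2-by-2 minor of the infinite matrix Y(j,k) = C(k+j, 2j) is nonnegative: for j < j' and k < k', C(k+j,2j)*C(k'+j',2j') - C(k'+j,2j)*C(k+j',2j') ≥ 0. -/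
private lemma step_Y (j j' m : ℕ) (hjj : j ≤ j') (hm : j' ≤ m) :
    (m + 1 + j).choose (2 * j) * (m + j').choose (2 * j') ≤
      (m + j).choose (2 * j) * (m + 1 + j').choose (2 * j') := by
  have hj : j ≤ m := le_trans hjj hm
  have h1 : (m + j).choose (2 * j) * (m + j + 1) =
      (m + j + 1).choose (2 * j) * (m + 1 - j) := by
    have := Nat.choose_mul_succ_eq (m + j) (2 * j)
    rwa [show m + j + 1 - 2 * j = m + 1 - j by omega] at this
  have h2 : (m + j').choose (2 * j') * (m + j' + 1) =
      (m + j' + 1).choose (2 * j') * (m + 1 - j') := by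
    have := Nat.choose_mul_succ_eq (m + j') (2 * j')
    rwa [show m + j' + 1 - 2 * j' = m + 1 - j' by omega] at this
  have hpos : 0 < (m + 1 - j) * (m + 1 - j') := by
    apply Nat.mul_pos <;> omega
  rw [show m + 1 + j = m + j + 1 by ring, show m + 1 + j' = m + j' + 1 by ring]
  apply Nat.le_of_mul_le_mul_right _ hpos
  have key : (m + 1 - j) * (m + j' + 1) ≥ (m + j + 1) * (m + 1 - j') := by
    zify [show j ≤ m + 1 by omega, show j' ≤ m + 1 by omega]
    nlinarith [hjj, hm]
  calc (m + j + 1).choose (2 * j) * (m + j').choose (2 * j')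
        * ((m + 1 - j) * (m + 1 - j'))
      = ((m + j + 1).choose (2 * j) * (m + 1 - j)) *
        ((m + j').choose (2 * j') * (m + 1 - j')) := by ring
    _ = ((m + j).choose (2 * j) * (m + j + 1)) *
        ((m + j').choose (2 * j') * (m + 1 - j')) := by rw [h1]
    _ = (m + j).choose (2 * j) * (m + j').choose (2 * j') *
        ((m + j + 1) * (m + 1 - j')) := by ring
    _ ≤ (m + j).choose (2 * j) * (m + j').choose (2 * j') *
        ((m + 1 - j) * (m + j' + 1)) := Nat.mul_le_mul_left _ key
    _ = ((m + j).choose (2 * j) * (m + 1 - j)) *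
        ((m + j').choose (2 * j') * (m + j' + 1)) := by ring
    _ = ((m + j).choose (2 * j) * (m + 1 - j)) *
        ((m + j' + 1).choose (2 * j') * (m + 1 - j')) := by rw [h2]
    _ = (m + j).choose (2 * j) * (m + j' + 1).choose (2 * j') *
        ((m + 1 - j) * (m + 1 - j')) := by ring

private lemma chain_Y (j j' k : ℕ) (hjj : j ≤ j') (hk : j' ≤ k) (d : ℕ) :
    (k + d + j).choose (2 * j) * (k + j').choose (2 * j') ≤
      (k + j).choose (2 * j) * (k + d + j').choose (2 * j') := by
  induction d with
  | zero => simp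
  | succ d ih =>
    have hstep := step_Y j j' (k + d) hjj (by omega)
    have hfpos : 0 < (k + d + j).choose (2 * j) := Nat.choose_pos (by omega)
    have hgpos : 0 < (k + d + j').choose (2 * j') := Nat.choose_pos (by omega)
    have hpos : 0 < (k + d + j).choose (2 * j) * (k + d + j').choose (2 * j') :=
      Nat.mul_pos hfpos hgpos
    apply Nat.le_of_mul_le_mul_left _ hpos
    rw [show k + (d + 1) = k + d + 1 by omega]
    calc (k + d + j).choose (2 * j) * (k + d + j').choose (2 * j') *
          ((k + d + 1 + j).choose (2 * j) * (k + j').choose (2 * j'))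
        = ((k + d + 1 + j).choose (2 * j) * (k + d + j').choose (2 * j')) *
          ((k + d + j).choose (2 * j) * (k + j').choose (2 * j')) := by ring
      _ ≤ ((k + d + j).choose (2 * j) * (k + d + 1 + j').choose (2 * j')) *
          ((k + d + j).choose (2 * j) * (k + j').choose (2 * j')) :=
          Nat.mul_le_mul_right _ hstep
      _ ≤ ((k + d + j).choose (2 * j) * (k + d + 1 + j').choose (2 * j')) *
          ((k + j).choose (2 * j) * (k + d + j').choose (2 * j')) :=
          Nat.mul_le_mul_left _ ih
      _ = (k + d + j).choose (2 * j) * (k + d + j').choose (2 * j') *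
          ((k + j).choose (2 * j) * (k + d + 1 + j').choose (2 * j')) := by ring

theorem minor2_nonneg_Y (j j' k k' : ℕ) (hj : j < j') (hk : k < k') :
    0 ≤ ((k + j).choose (2 * j) * (k' + j').choose (2 * j') : ℤ)
        - ((k' + j).choose (2 * j) * (k + j').choose (2 * j') : ℤ) := by
  rcases lt_or_ge k j' with h | h
  · have : (k + j').choose (2 * j') = 0 := Nat.choose_eq_zero_of_lt (by omega)
    rw [this]
    simp
    positivity
  · have := chain_Y j j' k hj.le h (k' - k)
    rw [show k + (k' - k) = k' by omega] at this
    have := Int.ofNat_le.mpr this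
    push_cast at this ⊢
    linarith
end

section
/- For all natural numbers n, k with k ≤ n, the polynomial identity holds: (1+s)^(2n+1) * (s/(1+s))^k - s^(2n+1) * ((1+s)/s)^k = sum over j from k to n of (s(s+1))^j * ((2n-2k+1)/(2n-2j+1)) * C(2n-(k+j), 2n-2j); equivalently, multiplying out, (1+s)^(2n+1-k) * s^k - s^(2n+1-k) * (1+s)^k = sum_{j=k}^{n} (s(s+1))^j * ((2n-2k+1)/(2n-2j+1)) * C(2n-k-j, 2n-2j) as polynomials in s. -/
open Finset


private lemma absorb_nat (a b : ℕ) :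
    (b+1) * Nat.choose (a+b+1) (b+1) = (a+b+1) * Nat.choose (a+b) b := by
  have h := Nat.add_one_mul_choose_eq (a+b) b
  rw [mul_comm]; exact h.symm

private lemma upper_nat (a b : ℕ) :
    (a+1) * Nat.choose (a+b+1) b = (a+b+1) * Nat.choose (a+b) b := by
  have h1 : Nat.choose (a+b+1) b = Nat.choose (a+b+1) (a+1) := by
    rw [← Nat.choose_symm (by omega : a+1 ≤ a+b+1)]
    congr 1
    omega
  have h2 : Nat.choose (a+b) b = Nat.choose (a+b) a := by
    rw [← Nat.choose_symm (by omega : a ≤ a+b)]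
    congr 1
    omega
  have h := Nat.add_one_mul_choose_eq (a+b) a
  rw [h1, h2, mul_comm]; exact h.symm

private lemma absorb_real (a b : ℕ) :
    ((b:ℝ)+1) * (Nat.choose (a+b+1) (b+1) : ℝ) = ((a:ℝ)+(b:ℝ)+1) * (Nat.choose (a+b) b : ℝ) := by
  exact_mod_cast congrArg (Nat.cast : ℕ → ℝ) (absorb_nat a b)

private lemma upper_real (a b : ℕ) :
    ((a:ℝ)+1) * (Nat.choose (a+b+1) b : ℝ) = ((a:ℝ)+(b:ℝ)+1) * (Nat.choose (a+b) b : ℝ) := by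
  exact_mod_cast congrArg (Nat.cast : ℕ → ℝ) (upper_nat a b)

/-- coefficient in the odd-power expansion -/
noncomputable def coA (i l : ℕ) : ℝ :=
  ((2*(i:ℝ)+2*(l:ℝ)+1)/(2*(l:ℝ)+1)) * (Nat.choose (2*l+i) i : ℝ)

/-- coefficient in the even-power expansion -/
noncomputable def coB (i l : ℕ) : ℝ :=
  ((2*(i:ℝ)+2*(l:ℝ))/(2*(l:ℝ)+(i:ℝ))) * (Nat.choose (2*l+i) i : ℝ)

private lemma lemII (i l : ℕ) : coA (i+1) l = coA i l + coB (i+1) l := by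
  have h := absorb_real (2*l) i
  have h1 : (2*(l:ℝ)+1) ≠ 0 := by positivity
  have h2 : (2*(l:ℝ)+(i:ℝ)+1) ≠ 0 := by positivity
  unfold coA coB
  have e1 : 2*l+(i+1) = 2*l+i+1 := by omega
  rw [e1]
  push_cast
  push_cast at h
  field_simp
  ring_nf
  ring_nf at h
  linear_combination (2*(i:ℝ)+2*(l:ℝ)+1) * h

private lemma lemI (i l : ℕ) : coB (i+1) (l+1) = coB i (l+1) + coA (i+1) l := by
  unfold coA coB
  have g1 : 2*(l+1)+(i+1) = 2*l+i+3 := by omega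
  have g2 : 2*(l+1)+i = 2*l+i+2 := by omega
  have g3 : 2*l+(i+1) = 2*l+i+1 := by omega
  rw [g1, g2, g3]
  have f1 : (2*(l:ℝ)+2) * (Nat.choose (2*l+i+3) (i+1) : ℝ)
      = (2*(l:ℝ)+(i:ℝ)+3) * (Nat.choose (2*l+i+2) (i+1) : ℝ) := by
    have h := upper_real (2*l+1) (i+1)
    have e : 2*l+1+(i+1)+1 = 2*l+i+3 := by omega
    have e' : 2*l+1+(i+1) = 2*l+i+2 := by omega
    rw [e, e'] at h
    push_cast at h ⊢
    linarith [h]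
  have f2 : (2*(l:ℝ)+1) * (Nat.choose (2*l+i+2) (i+1) : ℝ)
      = (2*(l:ℝ)+(i:ℝ)+2) * (Nat.choose (2*l+i+1) (i+1) : ℝ) := by
    have h := upper_real (2*l) (i+1)
    have e : 2*l+(i+1)+1 = 2*l+i+2 := by omega
    have e' : 2*l+(i+1) = 2*l+i+1 := by omega
    rw [e, e'] at h
    push_cast at h ⊢
    linarith [h]
  have f3 : (2*(l:ℝ)+2) * (Nat.choose (2*l+i+2) i : ℝ)
      = (2*(l:ℝ)+(i:ℝ)+2) * (Nat.choose (2*l+i+1) i : ℝ) := by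
    have h := upper_real (2*l+1) i
    have e : 2*l+1+i+1 = 2*l+i+2 := by omega
    have e' : 2*l+1+i = 2*l+i+1 := by omega
    rw [e, e'] at h
    push_cast at h ⊢
    linarith [h]
  have f4a : ((i:ℝ)+1) * (Nat.choose (2*l+i+1) (i+1) : ℝ)
      = (2*(l:ℝ)+(i:ℝ)+1) * (Nat.choose (2*l+i) i : ℝ) := by
    have h := absorb_real (2*l) i
    have e : 2*l+i+1 = 2*l+i+1 := rfl
    push_cast at h ⊢
    linarith [h]
  have f4b : (2*(l:ℝ)+1) * (Nat.choose (2*l+i+1) i : ℝ)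
      = (2*(l:ℝ)+(i:ℝ)+1) * (Nat.choose (2*l+i) i : ℝ) := by
    have h := upper_real (2*l) i
    have e : 2*l+i+1 = 2*l+i+1 := rfl
    push_cast at h ⊢
    linarith [h]
  have e1 : (2*(l:ℝ)+2)*(2*(l:ℝ)+1) * (Nat.choose (2*l+i+3) (i+1) : ℝ)
      = (2*(l:ℝ)+(i:ℝ)+3)*(2*(l:ℝ)+(i:ℝ)+2) * (Nat.choose (2*l+i+1) (i+1) : ℝ) := by
    linear_combination (2*(l:ℝ)+1)*f1 + (2*(l:ℝ)+(i:ℝ)+3)*f2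
  have e2 : (2*(l:ℝ)+2)*(2*(l:ℝ)+1) * (Nat.choose (2*l+i+2) i : ℝ)
      = (2*(l:ℝ)+(i:ℝ)+2)*((i:ℝ)+1) * (Nat.choose (2*l+i+1) (i+1) : ℝ) := by
    linear_combination (2*(l:ℝ)+1)*f3 + (2*(l:ℝ)+(i:ℝ)+2)*f4b - (2*(l:ℝ)+(i:ℝ)+2)*f4a
  have h1 : (2*(l:ℝ)+1) ≠ 0 := by positivity
  have h2 : (2*(l:ℝ)+2) ≠ 0 := by positivity
  have h3 : (2*(l:ℝ)+(i:ℝ)+3) ≠ 0 := by positivity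
  have h4 : (2*(l:ℝ)+(i:ℝ)+2) ≠ 0 := by positivity
  have ex3 : (Nat.choose (2*l+i+3) (i+1) : ℝ)
      = (2*(l:ℝ)+(i:ℝ)+3)*(2*(l:ℝ)+(i:ℝ)+2)/((2*(l:ℝ)+2)*(2*(l:ℝ)+1))
        * (Nat.choose (2*l+i+1) (i+1) : ℝ) := by
    rw [div_mul_eq_mul_div, eq_div_iff (by positivity)]
    linear_combination e1
  have ex2 : (Nat.choose (2*l+i+2) i : ℝ)
      = (2*(l:ℝ)+(i:ℝ)+2)*((i:ℝ)+1)/((2*(l:ℝ)+2)*(2*(l:ℝ)+1))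
        * (Nat.choose (2*l+i+1) (i+1) : ℝ) := by
    rw [div_mul_eq_mul_div, eq_div_iff (by positivity)]
    linear_combination e2
  rw [ex3, ex2]
  push_cast
  field_simp
  ring

private lemma coA_zero (l : ℕ) : coA 0 l = 1 := by
  unfold coA
  have h1 : (2*(l:ℝ)+1) ≠ 0 := by positivity
  simp [h1]

private lemma coB_zero (l : ℕ) : coB 0 (l+1) = 1 := by
  unfold coB
  have h1 : (2*((l:ℝ)+1)+0) ≠ 0 := by positivity
  push_cast
  push_cast at h1
  simp
  field_simp
  exact Nat.cast_add_one_ne_zero l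

private lemma coB_top (i : ℕ) : coB (i+1) 0 = 2 := by
  unfold coB
  have h1 : ((i:ℝ)+1) ≠ 0 := by positivity
  simp [Nat.choose_self]
  field_simp

private lemma stepP (m : ℕ) (t : ℝ) :
    ∑ i ∈ Finset.range (m+2), t^i * coA i (m+1-i)
      = t * ∑ i ∈ Finset.range (m+1), t^i * coA i (m-i)
        + ∑ i ∈ Finset.range (m+2), t^i * coB i (m+1-i) := by
  rw [Finset.mul_sum]
  rw [Finset.sum_range_succ' (fun i => t^i * coA i (m+1-i)) (m+1)]
  rw [Finset.sum_range_succ' (fun i => t^i * coB i (m+1-i)) (m+1)]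
  simp only [pow_zero, one_mul, Nat.sub_zero]
  have key : ∀ i ∈ Finset.range (m+1),
      t^(i+1) * coA (i+1) (m+1-(i+1))
        = t * (t^i * coA i (m-i)) + t^(i+1) * coB (i+1) (m+1-(i+1)) := by
    intro i hi
    have hi' : i ≤ m := by simp at hi; omega
    have e : m+1-(i+1) = m-i := by omega
    rw [e, lemII i (m-i)]
    ring
  rw [Finset.sum_congr rfl key, Finset.sum_add_distrib]
  rw [coA_zero, coB_zero]
  ring

private lemma stepQ (m : ℕ) (t : ℝ) :
    ∑ i ∈ Finset.range (m+3), t^i * coB i (m+2-i)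
      = t * ∑ i ∈ Finset.range (m+2), t^i * coB i (m+1-i)
        + ∑ i ∈ Finset.range (m+2), t^i * coA i (m+1-i) := by
  rw [Finset.mul_sum]
  -- peel last from LHS and from the first RHS sum
  rw [Finset.sum_range_succ (fun i => t^i * coB i (m+2-i)) (m+2)]
  rw [Finset.sum_range_succ (fun i => t * (t^i * coB i (m+1-i))) (m+1)]
  -- peel first from remaining LHS sum and from the A-sum
  rw [Finset.sum_range_succ' (fun i => t^i * coB i (m+2-i)) (m+1)]
  rw [Finset.sum_range_succ' (fun i => t^i * coA i (m+1-i)) (m+1)]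
  simp only [pow_zero, one_mul, Nat.sub_zero, Nat.sub_self]
  have key : ∀ i ∈ Finset.range (m+1),
      t^(i+1) * coB (i+1) (m+2-(i+1))
        = t * (t^i * coB i (m+1-i)) + t^(i+1) * coA (i+1) (m-i) := by
    intro i hi
    have hi' : i ≤ m := by simp at hi; omega
    have e : m+2-(i+1) = (m-i)+1 := by omega
    have e2 : m+1-i = (m-i)+1 := by omega
    rw [e, e2, lemI i (m-i)]
    ring
  rw [Finset.sum_congr rfl key, Finset.sum_add_distrib]
  have key2 : ∀ i ∈ Finset.range (m+1),
      t^(i+1) * coA (i+1) (m+1-(i+1)) = t^(i+1) * coA (i+1) (m-i) := by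
    intro i hi
    have hi' : i ≤ m := by simp at hi; omega
    have e : m+1-(i+1) = m-i := by omega
    rw [e]
  rw [Finset.sum_congr rfl key2]
  have eA : m+2-(m+1) = 1 := by omega
  have eB0 : coB 0 (m+2) = 1 := coB_zero (m+1)
  have eA0 : coA 0 (m+1) = 1 := coA_zero (m+1)
  rw [eB0, eA0, coB_top (m+1), coB_top m]
  ring

private lemma keyPQ (m : ℕ) (v : ℝ) :
    ((v+1)^(2*m+1) - v^(2*m+1)
        = ∑ i ∈ Finset.range (m+1), (v*(v+1))^i * coA i (m-i))
    ∧ ((v+1)^(2*(m+1)) + v^(2*(m+1))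
        = ∑ i ∈ Finset.range (m+2), (v*(v+1))^i * coB i (m+1-i)) := by
  induction m with
  | zero =>
    constructor
    · simp [coA_zero]
    · simp [Finset.sum_range_succ, coB_zero, coB_top]
      ring
  | succ m ih =>
    obtain ⟨hP, hQ⟩ := ih
    have hP1 : (v+1)^(2*(m+1)+1) - v^(2*(m+1)+1)
        = ∑ i ∈ Finset.range (m+2), (v*(v+1))^i * coA i (m+1-i) := by
      rw [stepP m (v*(v+1)), ← hP, ← hQ]
      ring
    refine ⟨hP1, ?_⟩
    have goalQ : (v+1)^(2*(m+2)) + v^(2*(m+2))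
        = ∑ i ∈ Finset.range (m+3), (v*(v+1))^i * coB i (m+2-i) := by
      rw [stepQ m (v*(v+1)), ← hQ, ← hP1]
      ring
    exact goalQ

theorem identity_one_generating (n k : ℕ) (hk : k ≤ n) (s : ℝ) :
    (1 + s) ^ (2 * n + 1 - k) * s ^ k - s ^ (2 * n + 1 - k) * (1 + s) ^ k
      = ∑ j ∈ Finset.Icc k n,
          (s * (s + 1)) ^ j * ((2 * n - 2 * k + 1 : ℝ) / (2 * n - 2 * j + 1))
            * ((2 * n - k - j).choose (2 * n - 2 * j) : ℝ) := by
  have hsum : (∑ j ∈ Finset.Icc k n,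
          (s * (s + 1)) ^ j * ((2 * n - 2 * k + 1 : ℝ) / (2 * n - 2 * j + 1))
            * ((2 * n - k - j).choose (2 * n - 2 * j) : ℝ))
      = ∑ i ∈ Finset.range (n - k + 1),
          (s*(s+1))^k * ((s*(s+1))^i * coA i (n - k - i)) := by
    refine Finset.sum_nbij' (fun j => j - k) (fun i => k + i) ?_ ?_ ?_ ?_ ?_
    · intro a ha
      simp only [Finset.mem_Icc] at ha
      simp only [Finset.mem_range]
      omega
    · intro a ha
      simp only [Finset.mem_range] at ha
      simp only [Finset.mem_Icc]
      omega
    · intro a ha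
      simp only [Finset.mem_Icc] at ha
      omega
    · intro a ha
      omega
    · intro j hj
      simp only [Finset.mem_Icc] at hj
      obtain ⟨h1, h2⟩ := hj
      set i := j - k with hi
      set l := n - j with hl
      have hji : j = k + i := by omega
      have e1 : 2*n - k - j = 2*l + i := by omega
      have e2 : 2*n - 2*j = 2*l := by omega
      have e3 : n - k - (j - k) = l := by omega
      have hchoose : Nat.choose (2*l+i) (2*l) = Nat.choose (2*l+i) i := by
        have h := Nat.choose_symm (by omega : i ≤ 2*l+i)
        rw [← h]
        congr 1
        omega
      rw [e1, e2, e3, hchoose]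
      unfold coA
      have hnr : (n:ℝ) = (k:ℝ) + (i:ℝ) + (l:ℝ) := by
        have : n = k + i + l := by omega
        exact_mod_cast congrArg (Nat.cast : ℕ → ℝ) this
      have hjr : (j:ℝ) = (k:ℝ) + (i:ℝ) := by
        exact_mod_cast congrArg (Nat.cast : ℕ → ℝ) hji
      rw [hnr, hjr, hji, pow_add]
      ring
  rw [hsum, ← Finset.mul_sum, ← (keyPQ (n-k) s).1]
  have e : 2*n + 1 - k = k + (2*(n-k)+1) := by omega
  rw [e, pow_add, pow_add, mul_pow]
  ring
end

section
/- For all natural numbers n, k with k ≤ n and all natural numbers i with i ≤ 2n+1: C(2n-k+1, 2n-i+1) - C(k, 2n-i+1) = sum over j from k to n of C(j, i-j) * ((2n-2k+1)/(2n-2j+1)) * C(2n-(k+j), 2n-2j). -/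
open Polynomial Finset

lemma cz_nat (a b : ℕ) : Cz a b = (a.choose b : ℤ) := by
  unfold Cz
  split_ifs with h
  · simp
  · have hab : a < b := by
      by_contra hc
      exact h ⟨by positivity, by exact_mod_cast not_lt.mp hc⟩
    rw [Nat.choose_eq_zero_of_lt hab]
    simp

lemma cz_neg (a b : ℤ) (h : b < 0) : Cz a b = 0 := by
  unfold Cz; rw [if_neg]; omega

lemma cz_pascal (a b : ℤ) (ha : 0 ≤ a) : Cz (a+1) b = Cz a b + Cz a (b-1) := by
  obtain ⟨x, rfl⟩ := Int.eq_ofNat_of_zero_le ha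
  rcases lt_or_ge b 0 with hb | hb
  · rw [cz_neg _ _ hb, cz_neg _ _ hb, cz_neg _ _ (by omega)]; ring
  obtain ⟨y, rfl⟩ := Int.eq_ofNat_of_zero_le hb
  have e1 : ((x:ℤ)+1) = ((x+1:ℕ):ℤ) := by push_cast; ring
  rw [e1, cz_nat, cz_nat]
  cases y with
  | zero => simp [cz_neg (x:ℤ) (-1) (by omega)]
  | succ y' =>
    have e2 : ((y'+1:ℕ):ℤ) - 1 = ((y':ℕ):ℤ) := by push_cast; ring
    rw [e2, cz_nat, Nat.choose_succ_succ]
    push_cast; ring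

/-- `Vz M d = Cz (M-d) d`, Fibonacci-polynomial style coefficients. -/
def Vz (M d : ℤ) : ℤ := Cz (M - d) d

lemma vz_pascal (M d : ℤ) (h : d ≤ M) : Vz (M+1) d = Vz M d + Vz (M-1) (d-1) := by
  unfold Vz
  have e : M + 1 - d = (M - d) + 1 := by ring
  rw [e, cz_pascal _ _ (by omega)]
  congr 2
  ring

/-- Coefficients in the expansion of `(X+1)^(2m+1) - X^(2m+1)` in powers of `X(X+1)`. -/
def Tz (m : ℕ) (d : ℤ) : ℤ := Vz (2*m+1) d + Vz (2*m-1) (d-1)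

lemma vz_zero_neg (M d : ℤ) (h : d < 0) : Vz M d = 0 := cz_neg _ _ h

lemma vz_zero_big (M d : ℤ) (h : M < 2*d) : Vz M d = 0 := by
  unfold Vz Cz
  rw [if_neg]; omega

lemma tz_zero_neg (m : ℕ) (d : ℤ) (h : d < 0) : Tz m d = 0 := by
  unfold Tz
  rw [vz_zero_neg _ _ h, vz_zero_neg _ _ (by omega)]; ring

lemma tz_zero_big (m : ℕ) (d : ℤ) (h : (m:ℤ) < d) : Tz m d = 0 := by
  unfold Tz
  rw [vz_zero_big _ _ (by omega), vz_zero_big _ _ (by omega)]; ring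

lemma tz_rec (m : ℕ) (d : ℤ) (hd : d ≤ 2*m+2) :
    Tz (m+2) d = Tz (m+1) d + 2 * Tz (m+1) (d-1) - Tz m (d-2) := by
  unfold Tz
  push_cast
  have e1 : (2*((m:ℤ)+2)+1) = (2*m+4)+1 := by ring
  have e2 : (2*((m:ℤ)+2)-1) = (2*m+2)+1 := by ring
  have e3 : (2*((m:ℤ)+1)+1) = (2*m+2)+1 := by ring
  have e4 : (2*((m:ℤ)+1)-1) = (2*m)+1 := by ring
  rw [e1, e2, e3, e4]
  have h1 := vz_pascal (2*m+4) d (by omega)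
  have h2 := vz_pascal (2*m+3) d (by omega)
  have h3 := vz_pascal (2*m+2) (d-1) (by omega)
  have h4 := vz_pascal (2*m+1) (d-1) (by omega)
  have h5 := vz_pascal (2*m) (d-2) (by omega)
  ring_nf at h1 h2 h3 h4 h5 ⊢
  linarith [h1, h2, h3, h4, h5]

lemma polyStep (m : ℕ)
    (ih0 : (X+1:ℤ[X])^(2*m+1) - X^(2*m+1)
      = ∑ d ∈ range (m+1), C (Tz m d) * (X*(X+1))^d)
    (ih1 : (X+1:ℤ[X])^(2*(m+1)+1) - X^(2*(m+1)+1)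
      = ∑ d ∈ range (m+2), C (Tz (m+1) d) * (X*(X+1))^d) :
    (X+1:ℤ[X])^(2*(m+2)+1) - X^(2*(m+2)+1)
      = ∑ d ∈ range (m+3), C (Tz (m+2) d) * (X*(X+1))^d := by
  have hA : ∑ d ∈ range (m+3), C (Tz (m+2) d) * (X*(X+1):ℤ[X])^d
      = ∑ d ∈ range (m+3), (C (Tz (m+1) (d:ℤ)) * (X*(X+1))^d
          + 2*(C (Tz (m+1) ((d:ℤ)-1)) * (X*(X+1))^d)
          - C (Tz m ((d:ℤ)-2)) * (X*(X+1))^d) := by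
    refine sum_congr rfl fun d hd => ?_
    have hd' : (d:ℤ) ≤ 2*m+2 := by
      have := mem_range.mp hd; exact_mod_cast by omega
    rw [tz_rec m d hd']
    simp only [map_add, map_sub, map_mul, map_ofNat]
    ring
  rw [show (2*(m+2)+1) = (2*(m+1)+1)+2 by ring, show (2*(m+1)+1) = (2*m+1)+2 by ring] at *
  have key : (X+1:ℤ[X])^((2*m+1)+2+2) - X^((2*m+1)+2+2)
      = (1+2*(X*(X+1)))*((X+1)^((2*m+1)+2) - X^((2*m+1)+2))
        - (X*(X+1))^2*((X+1)^(2*m+1) - X^(2*m+1)) := by ring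
  rw [key, ih0, ih1, hA, sum_sub_distrib, sum_add_distrib]
  have eA : ∑ d ∈ range (m+3), C (Tz (m+1) (d:ℤ)) * (X*(X+1):ℤ[X])^d
      = ∑ d ∈ range (m+2), C (Tz (m+1) (d:ℤ)) * (X*(X+1))^d := by
    rw [sum_range_succ, tz_zero_big (m+1) ((m+2 : ℕ):ℤ) (by exact_mod_cast by omega)]
    simp
  have eB : ∑ d ∈ range (m+3), 2*(C (Tz (m+1) ((d:ℤ)-1)) * (X*(X+1):ℤ[X])^d)
      = 2*(X*(X+1)) * ∑ d ∈ range (m+2), C (Tz (m+1) (d:ℤ)) * (X*(X+1))^d := by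
    rw [sum_range_succ']
    rw [tz_zero_neg (m+1) (((0:ℕ):ℤ)-1) (by norm_num)]
    rw [mul_sum]
    simp only [map_zero, zero_mul, mul_zero, pow_zero, mul_one, add_zero]
    refine sum_congr rfl fun d hd => ?_
    have : ((d+1:ℕ):ℤ) - 1 = (d:ℤ) := by push_cast; ring
    rw [this]
    ring
  have eC : ∑ d ∈ range (m+3), C (Tz m ((d:ℤ)-2)) * (X*(X+1):ℤ[X])^d
      = (X*(X+1))^2 * ∑ d ∈ range (m+1), C (Tz m (d:ℤ)) * (X*(X+1))^d := by
    rw [sum_range_succ', sum_range_succ']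
    rw [tz_zero_neg m (((0:ℕ):ℤ)-2) (by norm_num),
        tz_zero_neg m (((0+1:ℕ):ℤ)-2) (by norm_num)]
    rw [mul_sum]
    simp only [map_zero, zero_mul, mul_zero, pow_zero, mul_one, add_zero]
    refine sum_congr rfl fun d hd => ?_
    have : ((d+1+1:ℕ):ℤ) - 2 = (d:ℤ) := by push_cast; ring
    rw [this]
    ring
  rw [eA, eB, eC]
  ring

lemma polyId : ∀ m : ℕ, (X+1:ℤ[X])^(2*m+1) - X^(2*m+1)
    = ∑ d ∈ range (m+1), C (Tz m d) * (X*(X+1))^d := by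
  have base0 : (X+1:ℤ[X])^(2*0+1) - X^(2*0+1)
      = ∑ d ∈ range (0+1), C (Tz 0 d) * (X*(X+1))^d := by
    have : Tz 0 ((0:ℕ):ℤ) = 1 := by decide
    rw [sum_range_one, this]
    simp
  have base1 : (X+1:ℤ[X])^(2*1+1) - X^(2*1+1)
      = ∑ d ∈ range (1+1), C (Tz 1 d) * (X*(X+1))^d := by
    have h0 : Tz 1 ((0:ℕ):ℤ) = 1 := by decide
    have h1 : Tz 1 ((1:ℕ):ℤ) = 3 := by decide
    rw [sum_range_succ, sum_range_one, h0, h1]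
    ring_nf
    simp [C_1]
    ring_nf
  have key : ∀ m : ℕ,
      ((X+1:ℤ[X])^(2*m+1) - X^(2*m+1)
        = ∑ d ∈ range (m+1), C (Tz m d) * (X*(X+1))^d)
      ∧ ((X+1:ℤ[X])^(2*(m+1)+1) - X^(2*(m+1)+1)
        = ∑ d ∈ range (m+2), C (Tz (m+1) d) * (X*(X+1))^d) := by
    intro m
    induction m with
    | zero => exact ⟨base0, base1⟩
    | succ m ih => exact ⟨ih.2, polyStep m ih.1 ih.2⟩
  exact fun m => (key m).1

/-- Coefficient of `X^a (X+1)^b`. -/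
lemma coeff_X_pow_mul_add_pow (a b i : ℕ) :
    ((X:ℤ[X])^a * (X+1)^b).coeff i = if a ≤ i then (b.choose (i-a) : ℤ) else 0 := by
  rw [mul_comm, Polynomial.coeff_mul_X_pow']
  split_ifs with h
  · rw [Polynomial.coeff_X_add_one_pow]
  · rfl

lemma coeff_z_pow (j i : ℕ) : ((X*(X+1):ℤ[X])^j).coeff i = Cz j ((i:ℤ) - j) := by
  rw [mul_pow, coeff_X_pow_mul_add_pow]
  split_ifs with h
  · have : (i:ℤ) - j = ((i - j : ℕ) : ℤ) := by omega
    rw [this, cz_nat]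
  · rw [cz_neg]
    omega

lemma coeff_left (a b i : ℕ) (hi : i ≤ a + b) :
    ((X:ℤ[X])^a * (X+1)^b).coeff i = Cz b ((a + b - i : ℕ)) := by
  rw [coeff_X_pow_mul_add_pow, cz_nat]
  split_ifs with h
  · have h1 : a + b - i ≤ b := by omega
    have h2 : b - (a + b - i) = i - a := by omega
    rw [← Nat.choose_symm h1, h2]
  · rw [Nat.choose_eq_zero_of_lt (by omega)]
    simp

/-- Main integer-level identity. -/
lemma main_int (n k i : ℕ) (hk : k ≤ n) (hi : i ≤ 2*n+1) :
    Cz ((2*n-k+1 : ℕ)) ((2*n+1-i : ℕ)) - Cz (k:ℕ) ((2*n+1-i : ℕ))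
      = ∑ d ∈ range (n-k+1), Tz (n-k) d * Cz ((k+d : ℕ)) ((i:ℤ) - (k+d : ℕ)) := by
  set m := n - k with hm
  have hn : n = k + m := by omega
  have h := congrArg (fun p => ((X*(X+1):ℤ[X])^k * p).coeff i) (polyId m)
  -- LHS of h
  have hL : ((X*(X+1):ℤ[X])^k * ((X+1)^(2*m+1) - X^(2*m+1))).coeff i
      = Cz ((2*n-k+1 : ℕ)) ((2*n+1-i : ℕ)) - Cz (k:ℕ) ((2*n+1-i : ℕ)) := by
    have e : (X*(X+1):ℤ[X])^k * ((X+1)^(2*m+1) - X^(2*m+1))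
        = X^k * (X+1)^(2*n-k+1) - X^(2*n+1-k) * (X+1)^k := by
      rw [show 2*n-k+1 = k + (2*m+1) by omega, show 2*n+1-k = k + (2*m+1) by omega]
      rw [pow_add, pow_add, mul_pow]
      ring
    rw [e, Polynomial.coeff_sub, coeff_left k (2*n-k+1) i (by omega),
        coeff_left (2*n+1-k) k i (by omega)]
    congr 2 <;> omega
  -- RHS of h
  have hR : ((X*(X+1):ℤ[X])^k * ∑ d ∈ range (m+1), C (Tz m d) * (X*(X+1))^d).coeff i
      = ∑ d ∈ range (m+1), Tz m d * Cz ((k+d : ℕ)) ((i:ℤ) - (k+d : ℕ)) := by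
    rw [mul_sum, Polynomial.finset_sum_coeff]
    refine sum_congr rfl fun d hd => ?_
    have e : (X*(X+1):ℤ[X])^k * (C (Tz m d) * (X*(X+1))^d)
        = C (Tz m d) * (X*(X+1))^(k+d) := by
      rw [pow_add]; ring
    rw [e, Polynomial.coeff_C_mul, coeff_z_pow]
  rw [hL, hR] at h
  rw [show n - k + 1 = m + 1 from rfl]
  exact h

/-- Pascal-type arithmetic identity over ℤ. -/
lemma key_nat (m e : ℕ) (h : e + 1 ≤ m) :
    (2*(m:ℤ)+1) * ((2*m-e-1).choose (e+1) : ℤ)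
      = (2*(m:ℤ)-2*e-1) * (((2*m-e).choose (e+1) : ℤ) + ((2*m-e-1).choose e : ℤ)) := by
  have hP : (2*m-e).choose (e+1) = (2*m-e-1).choose e + (2*m-e-1).choose (e+1) := by
    rw [show 2*m-e = (2*m-e-1)+1 by omega]
    exact Nat.choose_succ_succ _ _
  have hR := Nat.choose_succ_right_eq (2*m-e-1) e
  rw [show 2*m-e-1-e = 2*m-2*e-1 by omega] at hR
  have hP' : ((2*m-e).choose (e+1) : ℤ)
      = ((2*m-e-1).choose e : ℤ) + ((2*m-e-1).choose (e+1) : ℤ) := by exact_mod_cast hP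
  have hc : ((2*m-2*e-1 : ℕ) : ℤ) = 2*(m:ℤ)-2*e-1 := by omega
  have hR' : ((2*m-e-1).choose (e+1) : ℤ) * ((e:ℤ)+1)
      = ((2*m-e-1).choose e : ℤ) * (2*(m:ℤ)-2*e-1) := by
    rw [← hc]; exact_mod_cast hR
  linear_combination (-(2*(m:ℤ)-2*e-1)) * hP' + 2 * hR'

/-- Key arithmetic identity relating the rational weight to `Tz`. -/
lemma key_weight (m d : ℕ) (hd : d ≤ m) :
    (2*(m:ℤ)+1) * Cz ((2*m-d : ℕ)) ((2*(m-d) : ℕ)) = (2*((m:ℤ)-d)+1) * Tz m d := by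
  have hTz : Tz m d = Cz ((2*m+1-d : ℕ)) (d:ℕ) + Vz (2*(m:ℤ)-1) ((d:ℤ)-1) := by
    unfold Tz Vz
    congr 2
    omega
  rcases Nat.eq_zero_or_pos d with rfl | hdpos
  · rw [hTz, vz_zero_neg _ _ (by norm_num)]
    rw [cz_nat, cz_nat]
    simp [Nat.choose_self]
  · obtain ⟨e, rfl⟩ := Nat.exists_eq_add_of_le hdpos
    have he : e + 1 ≤ m := by omega
    have hV : Vz (2*(m:ℤ)-1) (((1+e:ℕ):ℤ)-1) = ((2*m-e-1).choose e : ℤ) := by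
      unfold Vz
      rw [show (2*(m:ℤ)-1-(((1+e:ℕ):ℤ)-1)) = ((2*m-e-1 : ℕ):ℤ) by push_cast; omega,
          show (((1+e:ℕ):ℤ)-1) = ((e:ℕ):ℤ) by push_cast; ring, cz_nat]
    rw [hTz, hV, cz_nat, cz_nat]
    rw [show (2*m-(1+e)).choose (2*(m-(1+e))) = (2*m-e-1).choose (e+1) by
      rw [show 2*(m-(1+e)) = (2*m-e-1) - (e+1) by omega,
          show 2*m-(1+e) = 2*m-e-1 by omega]
      rw [Nat.choose_symm (by omega)]]
    rw [show (2*m+1-(1+e)).choose (1+e) = (2*m-e).choose (e+1) by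
      congr 1 <;> omega]
    rw [show (2*((m:ℤ)-((1+e:ℕ):ℤ))+1) = 2*(m:ℤ)-2*e-1 by push_cast; ring]
    exact key_nat m e he

theorem identity_one (n k i : ℕ) (hk : k ≤ n) (hi : i ≤ 2 * n + 1) :
    ((Cz (2 * (n : ℤ) - k + 1) (2 * (n : ℤ) - i + 1) : ℚ)
        - (Cz (k : ℤ) (2 * (n : ℤ) - i + 1) : ℚ))
      = ∑ j ∈ Finset.Icc k n,
          (Cz (j : ℤ) ((i : ℤ) - j) : ℚ)
            * ((2 * (n : ℚ) - 2 * k + 1) / (2 * (n : ℚ) - 2 * j + 1))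
            * (Cz (2 * (n : ℤ) - ((k : ℤ) + j)) (2 * (n : ℤ) - 2 * j) : ℚ) := by
  have hmain := main_int n k i hk hi
  set m := n - k with hm
  have hnm : n = k + m := by omega
  -- rewrite the LHS arguments
  rw [show (2 * (n : ℤ) - k + 1) = ((2*n-k+1 : ℕ) : ℤ) by omega,
      show (2 * (n : ℤ) - i + 1) = ((2*n+1-i : ℕ) : ℤ) by omega]
  -- reindex the sum
  have hmap : Finset.Icc k n
      = Finset.map ⟨fun d => k + d, add_right_injective k⟩ (range (m+1)) := by
    ext x
    simp only [Finset.mem_Icc, Finset.mem_map, Finset.mem_range, Function.Embedding.coeFn_mk]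
    constructor
    · rintro ⟨h1, h2⟩; exact ⟨x - k, by omega, by omega⟩
    · rintro ⟨d, hd, rfl⟩; omega
  rw [hmap, Finset.sum_map]
  simp only [Function.Embedding.coeFn_mk]
  -- termwise transformation
  have hterm : ∀ d ∈ range (m+1),
      (Cz ((k+d : ℕ) : ℤ) ((i : ℤ) - ((k+d : ℕ) : ℤ)) : ℚ)
        * ((2 * (n : ℚ) - 2 * k + 1) / (2 * (n : ℚ) - 2 * ((k+d : ℕ) : ℚ) + 1))
        * (Cz (2 * (n : ℤ) - ((k : ℤ) + ((k+d : ℕ) : ℤ))) (2 * (n : ℤ) - 2 * ((k+d : ℕ) : ℤ)) : ℚ)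
      = ((Tz m d * Cz ((k+d : ℕ) : ℤ) ((i:ℤ) - ((k+d : ℕ) : ℤ)) : ℤ) : ℚ) := by
    intro d hd
    have hdm : d ≤ m := by have := mem_range.mp hd; omega
    have e1 : (2 * (n : ℤ) - ((k : ℤ) + ((k+d : ℕ) : ℤ))) = ((2*m-d : ℕ) : ℤ) := by
      push_cast; omega
    have e2 : (2 * (n : ℤ) - 2 * ((k+d : ℕ) : ℤ)) = ((2*(m-d) : ℕ) : ℤ) := by
      push_cast; omega
    rw [e1, e2]
    have hkwq : (2*(m:ℚ)+1) * ((Cz ((2*m-d : ℕ)) ((2*(m-d) : ℕ)) : ℤ) : ℚ)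
        = (2*((m:ℚ)-(d:ℚ))+1) * ((Tz m d : ℤ) : ℚ) := by
      exact_mod_cast key_weight m d hdm
    have hnum : 2 * (n : ℚ) - 2 * (k : ℚ) + 1 = 2*(m:ℚ)+1 := by
      rw [show (n:ℚ) = ((k+m : ℕ) : ℚ) by exact_mod_cast hnm]
      push_cast; ring
    have hdeneq : 2 * (n : ℚ) - 2 * ((k+d : ℕ) : ℚ) + 1 = 2*((m:ℚ)-(d:ℚ))+1 := by
      rw [show (n:ℚ) = ((k+m : ℕ) : ℚ) by exact_mod_cast hnm]
      push_cast; ring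
    have hden : (2*((m:ℚ)-(d:ℚ))+1) ≠ 0 := by
      have : (d:ℚ) ≤ (m:ℚ) := by exact_mod_cast hdm
      intro hcon; linarith [this]
    rw [hnum, hdeneq, Int.cast_mul]
    push_cast [Nat.cast_sub hdm] at hkwq ⊢
    field_simp
    linear_combination ((Cz ((k:ℤ)+(d:ℤ)) ((i:ℤ) - ((k:ℤ)+(d:ℤ))) : ℤ) : ℚ) * hkwq
  rw [Finset.sum_congr rfl hterm]
  have hq := congrArg (fun z : ℤ => (z : ℚ)) hmain
  simp only [Int.cast_sub, Int.cast_sum] at hq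
  exact hq
end

section
/- Define F_a(z) = sum over j from 0 to a of z^j * ((2a+1)/(2a-2j+1)) * C(2a-j, 2a-2j). Then for all s, F_a(s(s+1)) = (s+1)^(2a+1) - s^(2a+1). -/
open Finset

private def Spoly (s : ℝ) (n : ℕ) : ℝ :=
  ∑ j ∈ range (n + 1), ((n - j).choose j : ℝ) * (s * (s + 1)) ^ j

private lemma S_rec (s : ℝ) (n : ℕ) :
    Spoly s (n + 2) = Spoly s (n + 1) + (s * (s + 1)) * Spoly s n := by
  have key : ∀ j ∈ range (n+2),
      ((n + 2 - (j+1)).choose (j+1) : ℝ) * (s * (s+1))^(j+1)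
        = ((n - j).choose j : ℝ) * (s*(s+1))^(j+1)
          + ((n + 1 - (j+1)).choose (j+1) : ℝ) * (s*(s+1))^(j+1) := by
    intro j hj
    rcases le_or_gt j n with h | h
    · have e1 : n + 2 - (j+1) = (n - j) + 1 := by omega
      have e2 : n + 1 - (j + 1) = n - j := by omega
      rw [e1, e2, Nat.choose_succ_succ']
      push_cast
      ring
    · have hj2 : j = n + 1 := by
        have := mem_range.mp hj; omega
      subst hj2
      have e1 : n + 2 - (n + 1 + 1) = 0 := by omega
      have e2 : n - (n+1) = 0 := by omega
      have e3 : n + 1 - (n + 1 + 1) = 0 := by omega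
      rw [e1, e2, e3]
      simp [Nat.choose_eq_zero_of_lt]
  unfold Spoly
  rw [Finset.sum_range_succ' _ (n+2), Finset.sum_congr rfl key, Finset.sum_add_distrib]
  rw [Finset.sum_range_succ _ (n+1)]
  have e2 : n - (n+1) = 0 := by omega
  rw [e2]
  rw [Finset.sum_range_succ _ (n+1)]
  have e3 : n + 1 - (n + 1 + 1) = 0 := by omega
  rw [e3]
  rw [Finset.sum_range_succ' (fun j => ((n + 1 - j).choose j : ℝ) * (s * (s+1))^j) (n+1)]
  simp [Nat.choose_eq_zero_of_lt, Finset.mul_sum]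
  have h4 : ∑ i ∈ range (n+1), s * (s+1) * (((n-i).choose i : ℝ) * (s*(s+1))^i)
      = ∑ i ∈ range (n+1), ((n-i).choose i : ℝ) * (s*(s+1))^(i+1) :=
    Finset.sum_congr rfl (fun i _ => by ring)
  rw [h4]
  ring

private lemma S_step (s : ℝ) : ∀ n, Spoly s (n + 1) = (s + 1) * Spoly s n + (-s) ^ (n + 1) := by
  intro n
  induction n with
  | zero => simp [Spoly, Finset.sum_range_succ]
  | succ m ih =>
    rw [S_rec]
    linear_combination (-s) * ih

private lemma S_step2 (s : ℝ) : ∀ n, Spoly s (n + 1) = (-s) * Spoly s n + (s + 1) ^ (n + 1) := by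
  intro n
  induction n with
  | zero => simp [Spoly, Finset.sum_range_succ]
  | succ m ih =>
    rw [S_rec]
    linear_combination (s + 1) * ih

private lemma nat_key (k d : ℕ) :
    ((2*k+2*d+3) * ((k+2*d+1).choose (2*d)) : ℝ)
      = (2*d+1) * (((k+2*d+2).choose (k+1) : ℝ) + ((k+2*d+1).choose k : ℝ)) := by
  have h1 : (k+2*d+1).choose (2*d) = (k+2*d+1).choose (k+1) := by
    rw [← Nat.choose_symm (by omega : k+1 ≤ k+2*d+1)]
    congr 1
    omega
  have h2 : (k+2*d+2).choose (k+1) = (k+2*d+1).choose k + (k+2*d+1).choose (k+1) :=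
    Nat.choose_succ_succ _ _
  have h3 : (k+2*d+1).choose (k+1) * (k+1) = (k+2*d+1).choose k * (2*d+1) := by
    have := Nat.choose_succ_right_eq (k+2*d+1) k
    have e : k+2*d+1 - k = 2*d+1 := by omega
    rwa [e] at this
  have h3' : ((k+2*d+1).choose (k+1) : ℝ) * (k+1) = ((k+2*d+1).choose k : ℝ) * (2*d+1) := by
    exact_mod_cast h3
  rw [h1, h2]
  push_cast
  linear_combination (2:ℝ) * h3'

private lemma coeff (a j : ℕ) (hj : j ≤ a) :
    ((2 * a + 1 : ℝ) / (2 * (a:ℝ) - 2 * (j:ℝ) + 1)) * ((2 * a - j).choose (2 * a - 2 * j) : ℝ)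
      = ((2 * a + 1 - j).choose j : ℝ)
        + (if j = 0 then 0 else ((2 * a - j).choose (j - 1) : ℝ)) := by
  rcases Nat.eq_zero_or_pos j with h0 | hpos
  · subst h0
    simp only [Nat.mul_zero, Nat.sub_zero, Nat.choose_self, Nat.cast_one, mul_one,
      Nat.choose_zero_right, if_pos rfl, add_zero, Nat.cast_zero]
    rw [mul_zero, sub_zero, div_self (by positivity : (2*(a:ℝ)+1) ≠ 0)]
    norm_num
  · obtain ⟨k, rfl⟩ : ∃ k, j = k + 1 := ⟨j - 1, by omega⟩
    obtain ⟨d, rfl⟩ : ∃ d, a = k + 1 + d := ⟨a - (k+1), by omega⟩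
    have e1 : 2 * (k+1+d) - (k+1) = k + 2*d + 1 := by omega
    have e2 : 2 * (k+1+d) - 2 * (k+1) = 2*d := by omega
    have e3 : 2 * (k+1+d) + 1 - (k+1) = k + 2*d + 2 := by omega
    have e4 : k + 1 - 1 = k := by omega
    rw [e1, e2, e3, e4, if_neg (by omega : ¬ k + 1 = 0)]
    have hden : 2 * (((k:ℕ)+1+d : ℕ):ℝ) - 2 * (((k:ℕ)+1 : ℕ):ℝ) + 1 ≠ 0 := by
      push_cast; nlinarith [Nat.cast_nonneg (α := ℝ) d]
    rw [div_mul_eq_mul_div, div_eq_iff hden]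
    push_cast
    linear_combination nat_key k d

theorem F_closed_form (a : ℕ) (s : ℝ) :
    (∑ j ∈ Finset.range (a + 1),
        (s * (s + 1)) ^ j * ((2 * a + 1 : ℝ) / (2 * a - 2 * j + 1))
          * ((2 * a - j).choose (2 * a - 2 * j) : ℝ))
      = (s + 1) ^ (2 * a + 1) - s ^ (2 * a + 1) := by
  rcases Nat.eq_zero_or_pos a with rfl | ha
  · norm_num
  · obtain ⟨b, rfl⟩ : ∃ b, a = b + 1 := ⟨a - 1, by omega⟩
    set a := b + 1 with hab
    -- rewrite the summand using coeff
    have step1 : (∑ j ∈ Finset.range (a + 1),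
        (s * (s + 1)) ^ j * ((2 * a + 1 : ℝ) / (2 * a - 2 * j + 1))
          * ((2 * a - j).choose (2 * a - 2 * j) : ℝ))
        = (∑ j ∈ Finset.range (a + 1),
            ((2 * a + 1 - j).choose j : ℝ) * (s * (s + 1)) ^ j)
          + (∑ j ∈ Finset.range (a + 1),
            (if j = 0 then 0 else ((2 * a - j).choose (j - 1) : ℝ)) * (s * (s + 1)) ^ j) := by
      rw [← Finset.sum_add_distrib]
      apply Finset.sum_congr rfl
      intro j hj
      have hja : j ≤ a := by have := mem_range.mp hj; omega
      rw [mul_assoc, coeff a j hja]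
      ring
    rw [step1]
    -- first sum is Spoly s (2a+1)
    have hA : (∑ j ∈ Finset.range (a + 1),
        ((2 * a + 1 - j).choose j : ℝ) * (s * (s + 1)) ^ j) = Spoly s (2*a+1) := by
      unfold Spoly
      apply Finset.sum_subset
      · apply Finset.range_subset_range.mpr; omega
      · intro j _ hj
        have : 2*a+1-j < j := by
          have := Finset.mem_range.not.mp hj
          omega
        rw [Nat.choose_eq_zero_of_lt this]
        simp
    -- second sum is z * Spoly s (2a-1)
    have hB : (∑ j ∈ Finset.range (a + 1),
        (if j = 0 then 0 else ((2 * a - j).choose (j - 1) : ℝ)) * (s * (s + 1)) ^ j)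
        = (s * (s + 1)) * Spoly s (2*b+1) := by
      rw [Finset.sum_range_succ' (fun j => (if j = 0 then 0 else ((2 * a - j).choose (j - 1) : ℝ)) * (s * (s + 1)) ^ j) a]
      simp only [if_pos rfl, zero_mul, add_zero]
      have e : ∀ j, ¬ (j + 1 = 0) := by omega
      have congr1 : ∀ j ∈ range a,
          (if j + 1 = 0 then 0 else ((2 * a - (j+1)).choose (j + 1 - 1) : ℝ)) * (s * (s + 1)) ^ (j+1)
            = (s * (s+1)) * (((2*b+1 - j).choose j : ℝ) * (s * (s + 1)) ^ j) := by
        intro j hj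
        rw [if_neg (e j)]
        have e5 : 2 * a - (j+1) = 2*b + 1 - j := by omega
        have e6 : j + 1 - 1 = j := by omega
        rw [e5, e6]
        ring
      rw [Finset.sum_congr rfl congr1, ← Finset.mul_sum]
      norm_num
      left
      apply Finset.sum_subset
      · apply Finset.range_subset_range.mpr; omega
      · intro j _ hj
        have : 2*b+1-j < j := by
          have := Finset.mem_range.not.mp hj
          omega
        rw [Nat.choose_eq_zero_of_lt this]
        simp
    rw [hA, hB]
    -- now use the step lemmas
    have h1 := S_step s (2*b+1)   -- Spoly (2b+2) = (s+1) Spoly (2b+1) + (-s)^(2b+2)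
    have h2 := S_step2 s (2*b+2)  -- Spoly (2b+3) = -s Spoly (2b+2) + (s+1)^(2b+3)
    have ee1 : (-s) ^ (2*b+1+1) = s ^ (2*b+2) := by
      rw [Even.neg_pow ⟨b+1, by ring⟩]
    have ee2 : 2*b+1+1 = 2*b+2 := by omega
    rw [ee2, ee1] at h1
    have e7 : 2*a+1 = 2*b+2+1 := by omega
    rw [e7]
    have e8 : (s+1)^(2*b+2+1) - s^(2*b+2+1) = (s+1)^(2*b+3) - s^(2*b+3) := by norm_num
    rw [e8]
    have e9 : (2*b+2+1) = 2*b+3 := by omega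
    rw [e9] at h2 ⊢
    linear_combination h2 - s * h1
end

section
/- Every 2-by-2 minor of the matrix M^(g)_d(i,k) = C(d-k+1, d-i+1) - C(k, d-i+1) is nonnegative: for 0 ≤ i < i' ≤ d and 0 ≤ k < k' ≤ floor(d/2), M(i,k)*M(i',k') - M(i,k')*M(i',k) ≥ 0. -/
/-- choose with natural row and integer column, `0` for negative column. -/
def CC (n : ℕ) (j : ℤ) : ℤ := if 0 ≤ j then (n.choose j.toNat : ℤ) else 0

lemma CC_nonneg (n : ℕ) (j : ℤ) : 0 ≤ CC n j := by
  unfold CC; split <;> positivity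

lemma CC_of_neg (n : ℕ) {j : ℤ} (h : j < 0) : CC n j = 0 := by
  simp [CC, not_le.2 h]

lemma CC_eq_zero (n : ℕ) {j : ℤ} (h : (n : ℤ) < j) : CC n j = 0 := by
  unfold CC
  split
  · next h0 =>
    have : n < j.toNat := by omega
    simp [Nat.choose_eq_zero_of_lt this]
  · rfl

lemma CC_pos (n : ℕ) {j : ℤ} (h0 : 0 ≤ j) (h1 : j ≤ n) : 0 < CC n j := by
  unfold CC
  rw [if_pos h0]
  have : j.toNat ≤ n := by omega
  exact_mod_cast Nat.choose_pos this

lemma CC_pascal (n : ℕ) (j : ℤ) : CC (n + 1) j = CC n j + CC n (j - 1) := by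
  rcases lt_or_ge j 0 with h | h
  · rw [CC_of_neg _ h, CC_of_neg _ h, CC_of_neg _ (by omega)]; ring
  · obtain ⟨m, rfl⟩ := Int.eq_ofNat_of_zero_le h
    cases m with
    | zero => simp [CC]
    | succ m =>
      have h1 : ((m + 1 : ℕ) : ℤ) - 1 = (m : ℕ) := by push_cast; ring
      rw [h1]
      simp only [CC, if_pos (by positivity : (0:ℤ) ≤ ((m+1:ℕ):ℤ)),
        if_pos (by positivity : (0:ℤ) ≤ ((m:ℕ):ℤ)), Int.toNat_natCast]
      rw [Nat.choose_succ_succ']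
      push_cast; ring

lemma natL1 (s t X Y : ℕ) (hst : s ≤ t) (hYX : Y ≤ X) :
    s.choose (X + 1) * t.choose Y ≤ s.choose X * t.choose (Y + 1) := by
  rcases le_or_gt s X with hXs | hXs
  · rw [Nat.choose_eq_zero_of_lt (by omega : s < X + 1)]
    simp
  · have h1 : s.choose (X + 1) * (X + 1) = s.choose X * (s - X) := Nat.choose_succ_right_eq s X
    have h2 : t.choose (Y + 1) * (Y + 1) = t.choose Y * (t - Y) := Nat.choose_succ_right_eq t Y
    have hp : 0 < (X + 1) * (Y + 1) := by positivity
    apply Nat.le_of_mul_le_mul_right _ hp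
    have key : (s - X) * (Y + 1) ≤ (t - Y) * (X + 1) :=
      Nat.mul_le_mul (by omega) (by omega)
    calc s.choose (X + 1) * t.choose Y * ((X + 1) * (Y + 1))
        = (s.choose (X + 1) * (X + 1)) * t.choose Y * (Y + 1) := by ring
      _ = s.choose X * t.choose Y * ((s - X) * (Y + 1)) := by rw [h1]; ring
      _ ≤ s.choose X * t.choose Y * ((t - Y) * (X + 1)) :=
          Nat.mul_le_mul_left _ key
      _ = s.choose X * (t.choose (Y+1) * (Y+1)) * (X + 1) := by rw [h2]; ring
      _ = s.choose X * t.choose (Y + 1) * ((X + 1) * (Y + 1)) := by ring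

lemma CCL1 (s t : ℕ) (hst : s ≤ t) (x y : ℤ) (h : y ≤ x) :
    CC s (x + 1) * CC t y ≤ CC s x * CC t (y + 1) := by
  rcases lt_or_ge y 0 with hy | hy
  · rw [CC_of_neg _ hy, mul_zero]
    exact mul_nonneg (CC_nonneg _ _) (CC_nonneg _ _)
  · have hx : 0 ≤ x := le_trans hy h
    obtain ⟨Y, rfl⟩ := Int.eq_ofNat_of_zero_le hy
    obtain ⟨X, rfl⟩ := Int.eq_ofNat_of_zero_le hx
    have hYX : Y ≤ X := by exact_mod_cast h
    have e1 : ((X:ℤ) + 1) = ((X + 1 : ℕ) : ℤ) := by push_cast; ring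
    have e2 : ((Y:ℤ) + 1) = ((Y + 1 : ℕ) : ℤ) := by push_cast; ring
    rw [e1, e2]
    simp only [CC, if_pos (Int.ofNat_nonneg _), Int.toNat_natCast]
    exact_mod_cast natL1 s t X Y hst hYX

lemma SS (s : ℕ) (c : ℤ) : ∀ t : ℕ, s ≤ t →
    (CC s c + CC (t + 1) c) * (CC (s + 1) (c + 1) + CC t (c + 1)) ≤
    (CC s (c + 1) + CC (t + 1) (c + 1)) * (CC (s + 1) c + CC t c) := by
  intro t hst
  induction t, hst using Nat.le_induction with
  | base => nlinarith [sq_nonneg (CC s c)]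
  | succ t hst IH =>
    have ec : (c + 1 - 1 : ℤ) = c := by ring
    have ec2 : (c - 1 - 1 : ℤ) = c - 2 := by ring
    simp only [CC_pascal, ec, ec2] at IH ⊢
    have e1 := CCL1 t t le_rfl (c - 1) (c - 2) (by linarith)
    have e2 := CCL1 t t le_rfl c (c - 2) (by linarith)
    have e3 := CCL1 s t hst (c - 1) (c - 2) (by linarith)
    have e4 := CCL1 s t hst c (c - 2) (by linarith)
    have e5 := CCL1 s t hst (c - 1) (c - 1) le_rfl
    simp only [show (c - 1 + 1 : ℤ) = c by ring, show (c - 2 + 1 : ℤ) = c - 1 by ring] at e1 e2 e3 e4 e5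
    nlinarith [e1, e2, e3, e4, e5, IH, CC_nonneg s (c-1), CC_nonneg s c, CC_nonneg s (c+1),
      CC_nonneg t (c-2), CC_nonneg t (c-1), CC_nonneg t c, CC_nonneg t (c+1)]

/-- the "folded" binomial row `C(m,c) + C(d-m,c)`. -/
def G (d m : ℕ) (c : ℤ) : ℤ := CC m c + CC (d - m) c

lemma G_nonneg (d m : ℕ) (c : ℤ) : 0 ≤ G d m c :=
  add_nonneg (CC_nonneg _ _) (CC_nonneg _ _)

lemma Gadj (d m : ℕ) (c : ℤ) (h : 2 * m + 1 ≤ d) :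
    G d m c * G d (m + 1) (c + 1) ≤ G d m (c + 1) * G d (m + 1) c := by
  have h1 : d - m = (d - m - 1) + 1 := by omega
  have h2 : d - (m + 1) = d - m - 1 := by omega
  unfold G
  rw [h1, h2]
  exact SS m c (d - m - 1) (by omega)

lemma Gclaim (d k : ℕ) (c : ℤ) : ∀ n : ℕ, k + 1 ≤ n → 2 * n ≤ d →
    G d k c * G d n (c + 1) ≤ G d k (c + 1) * G d n c := by
  intro n hn
  induction n, hn using Nat.le_induction with
  | base => intro h2; exact Gadj d k c (by omega)
  | succ n hn IH =>
    intro h2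
    have IH' := IH (by omega)
    have adj := Gadj d n c (by omega)
    rcases lt_or_eq_of_le (G_nonneg d n c) with hM | hM
    · have step1 : G d k c * G d (n+1) (c+1) * G d n c ≤ G d k (c+1) * G d (n+1) c * G d n c := by
        calc G d k c * G d (n+1) (c+1) * G d n c
            = G d k c * (G d n c * G d (n+1) (c+1)) := by ring
          _ ≤ G d k c * (G d n (c+1) * G d (n+1) c) :=
              mul_le_mul_of_nonneg_left adj (G_nonneg d k c)
          _ = (G d k c * G d n (c+1)) * G d (n+1) c := by ring
          _ ≤ (G d k (c+1) * G d n c) * G d (n+1) c :=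
              mul_le_mul_of_nonneg_right IH' (G_nonneg d (n+1) c)
          _ = G d k (c+1) * G d (n+1) c * G d n c := by ring
      exact le_of_mul_le_mul_right step1 hM
    · have hM' : CC n c + CC (d - n) c = 0 := by unfold G at hM; linarith
      have hz : CC n c = 0 ∧ CC (d - n) c = 0 := by
        constructor <;> linarith [CC_nonneg n c, CC_nonneg (d - n) c]
      rcases lt_or_ge c 0 with hc | hc
      · have : G d (n+1) (c+1) = 0 ∨ G d k c = 0 := by
          right; unfold G; rw [CC_of_neg _ hc, CC_of_neg _ hc]; ring
        rcases this with h | h <;> rw [h] <;>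
          simp <;>
          exact mul_nonneg (G_nonneg _ _ _) (G_nonneg _ _ _)
      · have hcn : (n : ℤ) < c := by
          by_contra hle
          exact absurd hz.1 (ne_of_gt (CC_pos n hc (by omega)))
        have hcdn : ((d - n : ℕ) : ℤ) < c := by
          by_contra hle
          exact absurd hz.2 (ne_of_gt (CC_pos (d - n) hc (by omega)))
        have hz1 : G d (n + 1) (c + 1) = 0 := by
          unfold G
          rw [CC_eq_zero (n + 1) (by push_cast; omega),
            CC_eq_zero (d - (n + 1)) (by push_cast [Nat.cast_sub (by omega : n+1 ≤ d)] at *; omega)]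
          ring
        rw [hz1, mul_zero]
        exact mul_nonneg (G_nonneg _ _ _) (G_nonneg _ _ _)

lemma Gclaim2 (d k n : ℕ) (c : ℤ) (h1 : k < n) (h2 : n ≤ d) (h3 : k < d - n) :
    G d k c * G d n (c + 1) ≤ G d k (c + 1) * G d n c := by
  rcases le_or_gt (2 * n) d with h | h
  · exact Gclaim d k c n h1 h
  · have hrefl : ∀ j : ℤ, G d (d - n) j = G d n j := by
      intro j; unfold G
      rw [show d - (d - n) = n by omega]; ring
    have := Gclaim d k c (d - n) h3 (by omega)
    rwa [hrefl, hrefl] at this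

/-- the entries of the `g`-to-`f` matrix: `A d k c = C(d-k+1,c+1) - C(k,c+1)`
as a sum of a row of Pascal's triangle. -/
def A (d k : ℕ) (c : ℤ) : ℤ := ∑ m ∈ Finset.Icc k (d - k), CC m c

lemma A_nonneg (d k : ℕ) (c : ℤ) : 0 ≤ A d k c :=
  Finset.sum_nonneg fun m _ => CC_nonneg m c

lemma A_split (d k : ℕ) (c : ℤ) (h : 2 * (k + 1) ≤ d) :
    A d k c = CC k c + CC (d - k) c + A d (k + 1) c := by
  unfold A
  rw [Finset.Icc_eq_cons_Ioc (by omega : k ≤ d - k), Finset.sum_cons]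
  rw [show d - k = (d - (k + 1)) + 1 by omega,
    Finset.sum_Ioc_succ_top (by omega : k ≤ d - (k + 1))]
  rw [← Finset.Icc_add_one_left_eq_Ioc]
  rw [show d - (k + 1) + 1 = d - k by omega]
  ring

lemma A_reflect (d k : ℕ) (c : ℤ) (hk : k ≤ d) :
    A d k c = ∑ m ∈ Finset.Icc k (d - k), CC (d - m) c := by
  unfold A
  apply Finset.sum_nbij' (fun m => d - m) (fun m => d - m)
  · intro a ha; simp only [Finset.mem_Icc] at *; omega
  · intro a ha; simp only [Finset.mem_Icc] at *; omega
  · intro a ha; simp only [Finset.mem_Icc] at *; omega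
  · intro a ha; simp only [Finset.mem_Icc] at *; omega
  · intro a ha; simp only [Finset.mem_Icc] at *
    rw [show d - (d - a) = a by omega]

lemma A_eq_zero_of_neg (d k : ℕ) {c : ℤ} (h : c < 0) : A d k c = 0 :=
  Finset.sum_eq_zero fun m _ => CC_of_neg m h

lemma A_eq_zero_of_lt (d k : ℕ) {c : ℤ} (h : ((d - k : ℕ) : ℤ) < c) : A d k c = 0 :=
  Finset.sum_eq_zero fun m hm => CC_eq_zero m (by
    simp only [Finset.mem_Icc] at hm
    have : (m : ℤ) ≤ ((d - k : ℕ) : ℤ) := by exact_mod_cast hm.2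
    omega)

lemma A_pos (d k : ℕ) {c : ℤ} (hk : 2 * k ≤ d) (h0 : 0 ≤ c) (h1 : c ≤ ((d - k : ℕ) : ℤ)) :
    0 < A d k c := by
  unfold A
  apply Finset.sum_pos' (fun m _ => CC_nonneg m c)
  exact ⟨d - k, Finset.mem_Icc.2 ⟨by omega, le_rfl⟩, CC_pos _ h0 h1⟩

lemma diamond (d k : ℕ) (c : ℤ) (h : 2 * (k + 1) ≤ d) :
    A d (k + 1) (c + 1) * A d k c ≤ A d k (c + 1) * A d (k + 1) c := by
  have key : G d k c * A d (k + 1) (c + 1) ≤ G d k (c + 1) * A d (k + 1) c := by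
    have hterm : ∀ n ∈ Finset.Icc (k + 1) (d - (k + 1)),
        G d k c * (CC n (c + 1) + CC (d - n) (c + 1)) ≤
        G d k (c + 1) * (CC n c + CC (d - n) c) := by
      intro n hn
      simp only [Finset.mem_Icc] at hn
      have := Gclaim2 d k n c (by omega) (by omega) (by omega)
      unfold G at this ⊢
      linarith
    have hs := Finset.sum_le_sum hterm
    rw [← Finset.mul_sum, ← Finset.mul_sum, Finset.sum_add_distrib, Finset.sum_add_distrib] at hs
    rw [← A, ← A, ← A_reflect d (k+1) (c+1) (by omega), ← A_reflect d (k+1) c (by omega)] at hs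
    linarith
  rw [A_split d k (c + 1) h, A_split d k c h]
  have g0 : G d k c = CC k c + CC (d - k) c := rfl
  have g1 : G d k (c + 1) = CC k (c + 1) + CC (d - k) (c + 1) := rfl
  rw [g0, g1] at key
  nlinarith [key]

lemma diamond2 (d k : ℕ) (h : 2 * (k + 1) ≤ d) (c c' : ℤ) (hc : c' ≤ c) :
    A d (k + 1) c * A d k c' ≤ A d k c * A d (k + 1) c' := by
  refine Int.le_induction
    (motive := fun x _ => A d (k + 1) x * A d k c' ≤ A d k x * A d (k + 1) c')
    (le_of_eq (by ring)) ?_ c hc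
  intro c hc IH
  rcases lt_or_eq_of_le (A_nonneg d (k + 1) c) with hM | hM
  · have step : A d (k + 1) (c + 1) * A d k c' * A d (k + 1) c ≤
        A d k (c + 1) * A d (k + 1) c' * A d (k + 1) c := by
      calc A d (k + 1) (c + 1) * A d k c' * A d (k + 1) c
          = A d k c' * A d (k + 1) c * A d (k + 1) (c + 1) := by ring
        _ ≤ A d k c * A d (k + 1) c' * A d (k + 1) (c + 1)  :=
            mul_le_mul_of_nonneg_right (by linarith [IH]) (A_nonneg d (k + 1) (c + 1))
        _ = (A d (k + 1) (c + 1) * A d k c) * A d (k + 1) c' := by ring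
        _ ≤ (A d k (c + 1) * A d (k + 1) c) * A d (k + 1) c' :=
            mul_le_mul_of_nonneg_right (diamond d k c h) (A_nonneg d (k + 1) c')
        _ = A d k (c + 1) * A d (k + 1) c' * A d (k + 1) c := by ring
    exact le_of_mul_le_mul_right step hM
  · rcases lt_or_ge c' 0 with hc' | hc'
    · rw [A_eq_zero_of_neg d k hc', mul_zero]
      exact mul_nonneg (A_nonneg _ _ _) (A_nonneg _ _ _)
    · have hlt : ((d - (k + 1) : ℕ) : ℤ) < c := by
        by_contra hle
        exact absurd hM (ne_of_lt (A_pos d (k + 1) (by omega) (le_trans hc' hc) (by omega)))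
      rw [A_eq_zero_of_lt d (k + 1) (by omega : ((d - (k+1) : ℕ) : ℤ) < c + 1), zero_mul]
      exact mul_nonneg (A_nonneg _ _ _) (A_nonneg _ _ _)

lemma chainK (d k : ℕ) (c c' : ℤ) (hc : c' ≤ c) : ∀ k', k ≤ k' → 2 * k' ≤ d →
    A d k' c * A d k c' ≤ A d k c * A d k' c' := by
  intro k' hk'
  induction k', hk' using Nat.le_induction with
  | base => intro _; exact le_of_eq (by ring)
  | succ k' hk' IH =>
    intro h2
    have IH' := IH (by omega)
    have dia := diamond2 d k' (by omega) c c' hc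
    rcases lt_or_eq_of_le (A_nonneg d k' c') with hM | hM
    · have step : A d (k' + 1) c * A d k c' * A d k' c' ≤
          A d k c * A d (k' + 1) c' * A d k' c' := by
        calc A d (k' + 1) c * A d k c' * A d k' c'
            = (A d (k' + 1) c * A d k' c') * A d k c' := by ring
          _ ≤ (A d k' c * A d (k' + 1) c') * A d k c' :=
              mul_le_mul_of_nonneg_right (by linarith [dia]) (A_nonneg d k c')
          _ = (A d k' c * A d k c') * A d (k' + 1) c' := by ring
          _ ≤ (A d k c * A d k' c') * A d (k' + 1) c' :=
              mul_le_mul_of_nonneg_right IH' (A_nonneg d (k' + 1) c')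
          _ = A d k c * A d (k' + 1) c' * A d k' c' := by ring
      exact le_of_mul_le_mul_right step hM
    · rcases lt_or_ge c' 0 with hc' | hc'
      · rw [A_eq_zero_of_neg d k hc', mul_zero]
        exact mul_nonneg (A_nonneg _ _ _) (A_nonneg _ _ _)
      · have hlt : ((d - k' : ℕ) : ℤ) < c' := by
          by_contra hle
          exact absurd hM (ne_of_lt (A_pos d k' (by omega) hc' (by omega)))
        rw [A_eq_zero_of_lt d (k' + 1) (by omega : ((d - (k'+1) : ℕ) : ℤ) < c), zero_mul]
        exact mul_nonneg (A_nonneg _ _ _) (A_nonneg _ _ _)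

lemma hockey (d k : ℕ) (c : ℤ) : ∀ n, k ≤ n →
    CC (n + 1) (c + 1) = CC k (c + 1) + ∑ m ∈ Finset.Icc k n, CC m c := by
  intro n hn
  induction n, hn using Nat.le_induction with
  | base =>
    rw [Finset.Icc_self, Finset.sum_singleton, CC_pascal k (c + 1),
      show (c + 1 - 1 : ℤ) = c by ring]
  | succ n hn IH =>
    rw [Finset.Icc_eq_cons_Ico (by omega : k ≤ n + 1), Finset.sum_cons,
      Finset.Ico_add_one_right_eq_Icc, CC_pascal (n + 1) (c + 1), show (c + 1 - 1 : ℤ) = c by ring, IH]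
    ring

lemma Cz_coe (n : ℕ) (j : ℤ) : Cz (n : ℤ) j = CC n j := by
  unfold Cz CC
  rcases lt_or_ge j 0 with h | h
  · rw [if_neg (by omega), if_neg (by omega)]
  · rw [if_pos h]
    rcases le_or_gt j (n : ℤ) with h2 | h2
    · rw [if_pos ⟨h, h2⟩, Int.toNat_natCast]
    · rw [if_neg (by omega), Nat.choose_eq_zero_of_lt (by omega)]; simp

lemma Adiff (d k i : ℕ) (hk : 2 * k ≤ d) (hi : i ≤ d) :
    Cz ((d : ℤ) - k + 1) ((d : ℤ) - i + 1) - Cz (k : ℤ) ((d : ℤ) - i + 1)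
      = A d k ((d : ℤ) - i) := by
  have e1 : ((d : ℤ) - k + 1) = ((d - k + 1 : ℕ) : ℤ) := by push_cast; omega
  have e2 : ((d : ℤ) - i + 1) = ((d : ℤ) - i) + 1 := by ring
  rw [e1, e2, Cz_coe, Cz_coe, hockey d k ((d : ℤ) - i) (d - k) (by omega)]
  unfold A
  ring

theorem minor2_nonneg_Mg (d i i' k k' : ℕ)
    (hii' : i < i') (hi' : i' ≤ d) (hkk' : k < k') (hk' : k' ≤ d / 2) :
    0 ≤ (Cz ((d : ℤ) - k + 1) ((d : ℤ) - i + 1) - Cz k ((d : ℤ) - i + 1))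
          * (Cz ((d : ℤ) - k' + 1) ((d : ℤ) - i' + 1) - Cz k' ((d : ℤ) - i' + 1))
        - (Cz ((d : ℤ) - k' + 1) ((d : ℤ) - i + 1) - Cz k' ((d : ℤ) - i + 1))
          * (Cz ((d : ℤ) - k + 1) ((d : ℤ) - i' + 1) - Cz k ((d : ℤ) - i' + 1)) := by
  have h2k' : 2 * k' ≤ d := by omega
  have h2k : 2 * k ≤ d := by omega
  rw [Adiff d k i h2k (by omega), Adiff d k' i' h2k' hi', Adiff d k' i h2k' (by omega),
    Adiff d k i' h2k hi']
  have := chainK d k ((d : ℤ) - i) ((d : ℤ) - i') (by omega) k' (by omega) h2k'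
  linarith
end

section
/- Let d be a natural number, n = floor(d/2), ε = (-1)^d. Define M^(γ)_d(i,k) = sum_j C(k, i-k-j)*C(d-2k, j)*2^j for 0 ≤ i ≤ d, 0 ≤ k ≤ n. With A_+(i,j) = C(j, i-j), A_-(i,j) = C(j+1, i-j) + C(j, i-j-1), and Γ(j,k) = 4^(k-j)*C(k,j), one has M^(γ)_d(i,k) = sum over j from 0 to n of A_ε(i,j) * Γ(n-j, n-k). -/
/-- `A₊(i,j) = C(j, i-j)`. -/
def Ap (i j : ℤ) : ℚ := (Cz j (i - j) : ℚ)

/-- `A₋(i,j) = C(j+1, i-j) + C(j, i-j-1)`. -/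
def Am (i j : ℤ) : ℚ := (Cz (j + 1) (i - j) : ℚ) + (Cz j (i - j - 1) : ℚ)

/-- `Γ(j,k) = 4^(k-j) C(k,j)` (automatically `0` for `j > k`). -/
def Gam (j k : ℤ) : ℚ := (4 : ℚ) ^ (k - j) * (Cz k j : ℚ)

lemma Cz_natCast_s18 (b : ℕ) (k : ℤ) :
    Cz (b : ℤ) k = if 0 ≤ k then (b.choose k.toNat : ℤ) else 0 := by
  unfold Cz
  by_cases h0 : 0 ≤ k
  · by_cases h1 : k ≤ (b : ℤ)
    · simp [h0, h1]
    · rw [if_neg (by tauto), if_pos h0, Nat.choose_eq_zero_of_lt (by omega)]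
      simp
  · simp [h0]

lemma Cz_zero (x : ℤ) : Cz 0 x = if x = 0 then 1 else 0 := by
  unfold Cz
  by_cases h : x = 0
  · simp [h]
  · rw [if_neg (by omega), if_neg h]

lemma Cz_neg (b : ℕ) (k : ℤ) (hk : k < 0) : Cz (b : ℤ) k = 0 := by
  rw [Cz_natCast_s18, if_neg (by omega)]

lemma Cz_big (b : ℕ) (k : ℤ) (hk : (b : ℤ) < k) : Cz (b : ℤ) k = 0 := by
  rw [Cz_natCast_s18]
  by_cases h0 : 0 ≤ k
  · rw [if_pos h0, Nat.choose_eq_zero_of_lt (by omega)]; simp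
  · rw [if_neg h0]

lemma Cz_pascal (b : ℕ) (j : ℤ) :
    Cz ((b : ℤ) + 1) j = Cz (b : ℤ) j + Cz (b : ℤ) (j - 1) := by
  have h : ((b : ℤ) + 1) = ((b + 1 : ℕ) : ℤ) := by push_cast; ring
  rw [h, Cz_natCast_s18, Cz_natCast_s18, Cz_natCast_s18]
  rcases lt_or_ge j 0 with hj | hj
  · rw [if_neg (by omega), if_neg (by omega), if_neg (by omega)]; simp
  · rcases hj.eq_or_lt with rfl | hj1
    · simp
    · have h1 : (0 : ℤ) ≤ j - 1 := by omega
      rw [if_pos hj, if_pos hj, if_pos h1]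
      have ht : j.toNat = (j - 1).toNat + 1 := by omega
      rw [ht, Nat.choose_succ_succ]
      push_cast; ring

lemma Cz_symm (b : ℕ) (t : ℤ) : Cz (b : ℤ) ((b : ℤ) - t) = Cz (b : ℤ) t := by
  rw [Cz_natCast_s18, Cz_natCast_s18]
  rcases lt_or_ge t 0 with ht | ht
  · rw [if_pos (by omega), if_neg (by omega), Nat.choose_eq_zero_of_lt (by omega)]
    simp
  · rcases le_or_gt t (b : ℤ) with htb | htb
    · rw [if_pos (by omega), if_pos ht]
      have : ((b : ℤ) - t).toNat = b - t.toNat := by omega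
      rw [this, Nat.choose_symm (by omega)]
    · rw [if_neg (by omega), if_pos ht, Nat.choose_eq_zero_of_lt (by omega)]
      simp

lemma Cz_vandermonde (a : ℕ) (s : ℤ) : ∀ (b N : ℕ) (c : ℤ), 0 ≤ c → c + b < N →
    ∑ j ∈ Finset.range N, Cz (a : ℤ) (s - j) * Cz (b : ℤ) ((j : ℤ) - c)
      = Cz ((a : ℤ) + b) (s - c) := by
  intro b
  induction b with
  | zero =>
    intro N c hc hN
    rw [Finset.sum_eq_single_of_mem c.toNat
      (Finset.mem_range.2 (by omega))]
    · rw [show ((c.toNat : ℤ) - c) = 0 by omega, show (s - (c.toNat : ℤ)) = s - c by omega]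
      simp [Cz_zero]
    · intro j _ hj
      have : Cz ((0:ℕ) : ℤ) ((j : ℤ) - c) = 0 := by
        rw [show ((0:ℕ):ℤ) = 0 by norm_num, Cz_zero]
        rw [if_neg (by omega)]
      rw [this, mul_zero]
  | succ b ih =>
    intro N c hc hN
    have step : ∀ j : ℕ, Cz (a : ℤ) (s - j) * Cz ((b + 1 : ℕ) : ℤ) ((j : ℤ) - c)
        = Cz (a : ℤ) (s - j) * Cz (b : ℤ) ((j : ℤ) - c)
          + Cz (a : ℤ) (s - j) * Cz (b : ℤ) ((j : ℤ) - (c + 1)) := by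
      intro j
      have : ((b + 1 : ℕ) : ℤ) = (b : ℤ) + 1 := by push_cast; ring
      rw [this, Cz_pascal, show (j : ℤ) - c - 1 = (j : ℤ) - (c + 1) by ring, mul_add]
    calc ∑ j ∈ Finset.range N, Cz (a : ℤ) (s - j) * Cz ((b + 1 : ℕ) : ℤ) ((j : ℤ) - c)
        = ∑ j ∈ Finset.range N, (Cz (a : ℤ) (s - j) * Cz (b : ℤ) ((j : ℤ) - c)
          + Cz (a : ℤ) (s - j) * Cz (b : ℤ) ((j : ℤ) - (c + 1))) :=
          Finset.sum_congr rfl (fun j _ => step j)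
      _ = Cz ((a : ℤ) + b) (s - c) + Cz ((a : ℤ) + b) (s - (c + 1)) := by
          rw [Finset.sum_add_distrib, ih N c hc (by omega), ih N (c + 1) (by omega) (by omega)]
      _ = Cz ((a : ℤ) + (b + 1)) (s - c) := by
          have h1 : ((a : ℤ) + (b + 1)) = ((a + b : ℕ) : ℤ) + 1 := by push_cast; ring
          have h2 : ((a : ℤ) + b) = ((a + b : ℕ) : ℤ) := by push_cast; ring
          rw [h1, h2, Cz_pascal, show s - c - 1 = s - (c + 1) by ring]

lemma Cz_pow_shift (b : ℕ) (x : ℤ) :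
    (Cz (b : ℤ) (x - 1) : ℚ) * 2 ^ x.toNat
      = 2 * ((Cz (b : ℤ) (x - 1) : ℚ) * 2 ^ (x - 1).toNat) := by
  by_cases h : 1 ≤ x
  · rw [show x.toNat = (x - 1).toNat + 1 by omega]
    ring
  · rw [Cz_neg b (x - 1) (by omega)]
    simp

lemma L3e : ∀ (m : ℕ) (j : ℤ),
    (Cz ((2 * m : ℕ) : ℤ) j : ℚ) * 2 ^ j.toNat
      = ∑ t ∈ Finset.range (m + 1),
          (Cz (m : ℤ) (t : ℤ) : ℚ) * 4 ^ t * (Cz (t : ℤ) (j - t) : ℚ) := by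
  intro m
  induction m with
  | zero =>
    intro j
    rw [Finset.sum_range_one]
    by_cases h : j = 0 <;> simp [Cz_zero, h]
  | succ m ih =>
    intro j
    -- LHS decomposition
    have hL : (Cz ((2 * (m + 1) : ℕ) : ℤ) j : ℚ) * 2 ^ j.toNat
        = (Cz ((2 * m : ℕ) : ℤ) j : ℚ) * 2 ^ j.toNat
          + 4 * ((Cz ((2 * m : ℕ) : ℤ) (j - 1) : ℚ) * 2 ^ (j - 1).toNat)
          + 4 * ((Cz ((2 * m : ℕ) : ℤ) (j - 2) : ℚ) * 2 ^ (j - 2).toNat) := by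
      have e1 : ((2 * (m + 1) : ℕ) : ℤ) = ((2 * m + 1 : ℕ) : ℤ) + 1 := by push_cast; ring
      have e2 : ((2 * m + 1 : ℕ) : ℤ) = ((2 * m : ℕ) : ℤ) + 1 := by push_cast; ring
      rw [e1, Cz_pascal, e2, Cz_pascal, Cz_pascal]
      rw [Int.cast_add, Int.cast_add, Int.cast_add]
      rw [show j - 1 - 1 = j - 2 by ring]
      have s1 := Cz_pow_shift (2 * m) j
      have s2' : (Cz ((2*m:ℕ):ℤ) (j-2) : ℚ) * 2 ^ j.toNat
          = 4 * ((Cz ((2*m:ℕ):ℤ) (j-2) : ℚ) * 2 ^ (j-2).toNat) := by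
        have u1 : (Cz ((2*m:ℕ):ℤ) (j-2) : ℚ) * 2 ^ j.toNat
            = 2 * ((Cz ((2*m:ℕ):ℤ) (j-2) : ℚ) * 2 ^ (j-1).toNat) := by
          by_cases h : 2 ≤ j
          · rw [show j.toNat = (j-1).toNat + 1 by omega]; ring
          · rw [Cz_neg (2*m) (j-2) (by omega)]; simp
        have s2 := Cz_pow_shift (2 * m) (j - 1)
        rw [show j - 1 - 1 = j - 2 by ring] at s2
        rw [u1, s2]; ring
      have expand : ((Cz ((2*m:ℕ):ℤ) j : ℚ) + (Cz ((2*m:ℕ):ℤ) (j-1) : ℚ)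
            + ((Cz ((2*m:ℕ):ℤ) (j-1) : ℚ) + (Cz ((2*m:ℕ):ℤ) (j-2) : ℚ))) * 2 ^ j.toNat
          = (Cz ((2*m:ℕ):ℤ) j : ℚ) * 2 ^ j.toNat
            + 2 * ((Cz ((2*m:ℕ):ℤ) (j-1) : ℚ) * 2 ^ j.toNat)
            + ((Cz ((2*m:ℕ):ℤ) (j-2) : ℚ) * 2 ^ j.toNat) := by ring
      rw [expand, s2', s1]
      ring
    -- RHS decomposition
    have hR : ∑ t ∈ Finset.range (m + 1 + 1),
          (Cz ((m+1 : ℕ) : ℤ) (t : ℤ) : ℚ) * 4 ^ t * (Cz (t : ℤ) (j - t) : ℚ)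
        = (∑ t ∈ Finset.range (m + 1),
            (Cz (m : ℤ) (t : ℤ) : ℚ) * 4 ^ t * (Cz (t : ℤ) (j - t) : ℚ))
          + (4 * (∑ t ∈ Finset.range (m + 1),
            (Cz (m : ℤ) (t : ℤ) : ℚ) * 4 ^ t * (Cz (t : ℤ) ((j - 1) - t) : ℚ))
          + 4 * (∑ t ∈ Finset.range (m + 1),
            (Cz (m : ℤ) (t : ℤ) : ℚ) * 4 ^ t * (Cz (t : ℤ) ((j - 2) - t) : ℚ))) := by
      have step1 : ∑ t ∈ Finset.range (m + 1 + 1),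
            (Cz ((m+1 : ℕ) : ℤ) (t : ℤ) : ℚ) * 4 ^ t * (Cz (t : ℤ) (j - t) : ℚ)
          = (∑ t ∈ Finset.range (m + 1 + 1),
              (Cz (m : ℤ) (t : ℤ) : ℚ) * 4 ^ t * (Cz (t : ℤ) (j - t) : ℚ))
            + ∑ t ∈ Finset.range (m + 1 + 1),
              (Cz (m : ℤ) ((t : ℤ) - 1) : ℚ) * 4 ^ t * (Cz (t : ℤ) (j - t) : ℚ) := by
        rw [← Finset.sum_add_distrib]
        refine Finset.sum_congr rfl (fun t _ => ?_)
        have : ((m + 1 : ℕ) : ℤ) = (m : ℤ) + 1 := by push_cast; ring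
        rw [this, Cz_pascal, Int.cast_add]; ring
      have cut1 : ∑ t ∈ Finset.range (m + 1 + 1),
            (Cz (m : ℤ) (t : ℤ) : ℚ) * 4 ^ t * (Cz (t : ℤ) (j - t) : ℚ)
          = ∑ t ∈ Finset.range (m + 1),
            (Cz (m : ℤ) (t : ℤ) : ℚ) * 4 ^ t * (Cz (t : ℤ) (j - t) : ℚ) := by
        rw [Finset.sum_range_succ, Cz_big m ((m+1 : ℕ) : ℤ) (by push_cast; omega)]
        simp
      have cut2 : ∑ t ∈ Finset.range (m + 1 + 1),
            (Cz (m : ℤ) ((t : ℤ) - 1) : ℚ) * 4 ^ t * (Cz (t : ℤ) (j - t) : ℚ)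
          = ∑ t ∈ Finset.range (m + 1),
            (Cz (m : ℤ) (t : ℤ) : ℚ) * 4 ^ (t + 1) * (Cz ((t : ℤ) + 1) (j - ((t : ℤ) + 1)) : ℚ) := by
        rw [Finset.sum_range_succ']
        have h0 : (Cz (m : ℤ) (((0:ℕ) : ℤ) - 1) : ℚ) = 0 := by
          rw [show ((0:ℕ):ℤ) - 1 = -1 by norm_num, Cz_neg m (-1) (by norm_num)]
          norm_num
        rw [h0]
        simp only [zero_mul, add_zero]
        refine Finset.sum_congr rfl (fun t _ => ?_)
        have c1 : ((t + 1 : ℕ) : ℤ) = (t : ℤ) + 1 := by push_cast; ring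
        rw [c1, show (t : ℤ) + 1 - 1 = (t : ℤ) by ring]
      have split2 : ∑ t ∈ Finset.range (m + 1),
            (Cz (m : ℤ) (t : ℤ) : ℚ) * 4 ^ (t + 1) * (Cz ((t : ℤ) + 1) (j - ((t : ℤ) + 1)) : ℚ)
          = 4 * (∑ t ∈ Finset.range (m + 1),
            (Cz (m : ℤ) (t : ℤ) : ℚ) * 4 ^ t * (Cz (t : ℤ) ((j - 1) - t) : ℚ))
          + 4 * (∑ t ∈ Finset.range (m + 1),
            (Cz (m : ℤ) (t : ℤ) : ℚ) * 4 ^ t * (Cz (t : ℤ) ((j - 2) - t) : ℚ)) := by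
        rw [Finset.mul_sum, Finset.mul_sum, ← Finset.sum_add_distrib]
        refine Finset.sum_congr rfl (fun t _ => ?_)
        rw [Cz_pascal t (j - ((t : ℤ) + 1)), Int.cast_add]
        rw [show j - ((t:ℤ) + 1) - 1 = (j - 2) - t by ring,
            show j - ((t:ℤ) + 1) = (j - 1) - t by ring]
        ring
      rw [step1, cut1, cut2, split2]
    rw [hL, hR, ih j, ih (j - 1), ih (j - 2)]
    ring

lemma L3o (m : ℕ) (j : ℤ) :
    (Cz ((2 * m + 1 : ℕ) : ℤ) j : ℚ) * 2 ^ j.toNat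
      = ∑ t ∈ Finset.range (m + 1),
          (Cz (m : ℤ) (t : ℤ) : ℚ) * 4 ^ t *
            ((Cz (t : ℤ) (j - t) : ℚ) + 2 * (Cz (t : ℤ) (j - t - 1) : ℚ)) := by
  have e2 : ((2 * m + 1 : ℕ) : ℤ) = ((2 * m : ℕ) : ℤ) + 1 := by push_cast; ring
  rw [e2, Cz_pascal, Int.cast_add, add_mul, Cz_pow_shift (2 * m) j, L3e m j, L3e m (j - 1)]
  rw [Finset.mul_sum, ← Finset.sum_add_distrib]
  refine Finset.sum_congr rfl (fun t _ => ?_)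
  rw [show j - 1 - (t : ℤ) = j - t - 1 by ring]
  ring

theorem decomposition_Mgamma (d : ℕ) (n : ℕ) (hn : n = d / 2) (i k : ℕ)
    (hi : i ≤ d) (hk : k ≤ n) :
    (∑ j ∈ Finset.range (d + 1),
        (Cz (k : ℤ) ((i : ℤ) - k - j) : ℚ) * (Cz ((d : ℤ) - 2 * k) (j : ℤ) : ℚ) * 2 ^ j)
      = ∑ j ∈ Finset.range (n + 1),
          if Even d then Ap i j * Gam ((n : ℤ) - j) ((n : ℤ) - k)
          else Am i j * Gam ((n : ℤ) - j) ((n : ℤ) - k) := by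
  set m := n - k with hmdef
  have hmk : n = k + m := by omega
  -- generic Vandermonde application
  have vand : ∀ (t : ℕ) (c : ℤ), 0 ≤ c → c + (t : ℤ) < ((d + 1 : ℕ) : ℤ) →
      ∑ j ∈ Finset.range (d + 1),
        (Cz (k : ℤ) ((i : ℤ) - k - j) : ℚ) * (Cz (t : ℤ) ((j : ℤ) - c) : ℚ)
      = (Cz ((k : ℤ) + t) ((i : ℤ) - k - c) : ℚ) := by
    intro t c h1 h2
    exact_mod_cast Cz_vandermonde k ((i : ℤ) - k) t (d + 1) c h1 h2
  rcases Nat.even_or_odd d with hd | hd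
  · -- even case
    have hd2 : d = 2 * n := by obtain ⟨c, hc⟩ := hd; omega
    have lhs1 : (∑ j ∈ Finset.range (d + 1),
          (Cz (k : ℤ) ((i : ℤ) - k - j) : ℚ) * (Cz ((d : ℤ) - 2 * k) (j : ℤ) : ℚ) * 2 ^ j)
        = ∑ t ∈ Finset.range (m + 1),
            ((Cz (m : ℤ) (t : ℤ) : ℚ) * 4 ^ t) * (Cz ((k : ℤ) + t) ((i : ℤ) - k - t) : ℚ) := by
      calc (∑ j ∈ Finset.range (d + 1),
            (Cz (k : ℤ) ((i : ℤ) - k - j) : ℚ) * (Cz ((d : ℤ) - 2 * k) (j : ℤ) : ℚ) * 2 ^ j)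
          = ∑ j ∈ Finset.range (d + 1), ∑ t ∈ Finset.range (m + 1),
              ((Cz (m : ℤ) (t : ℤ) : ℚ) * 4 ^ t) *
                ((Cz (k : ℤ) ((i : ℤ) - k - j) : ℚ) * (Cz (t : ℤ) ((j : ℤ) - t) : ℚ)) := by
            refine Finset.sum_congr rfl (fun j _ => ?_)
            have e : ((d : ℤ) - 2 * k) = ((2 * m : ℕ) : ℤ) := by push_cast; omega
            have hl := L3e m (j : ℤ)
            rw [Int.toNat_natCast] at hl
            rw [e, mul_assoc, hl, Finset.mul_sum]
            refine Finset.sum_congr rfl (fun t _ => ?_)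
            ring
        _ = ∑ t ∈ Finset.range (m + 1),
              ((Cz (m : ℤ) (t : ℤ) : ℚ) * 4 ^ t) *
                ∑ j ∈ Finset.range (d + 1),
                  (Cz (k : ℤ) ((i : ℤ) - k - j) : ℚ) * (Cz (t : ℤ) ((j : ℤ) - t) : ℚ) := by
            rw [Finset.sum_comm]
            exact Finset.sum_congr rfl (fun t _ => by rw [Finset.mul_sum])
        _ = ∑ t ∈ Finset.range (m + 1),
              ((Cz (m : ℤ) (t : ℤ) : ℚ) * 4 ^ t) * (Cz ((k : ℤ) + t) ((i : ℤ) - k - t) : ℚ) := by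
            refine Finset.sum_congr rfl (fun t ht => ?_)
            have ht' := Finset.mem_range.mp ht
            rw [vand t (t : ℤ) (by positivity) (by push_cast; omega)]
    rw [lhs1]
    have rhs1 : ∑ j ∈ Finset.range (n + 1),
          (if Even d then Ap i j * Gam ((n : ℤ) - j) ((n : ℤ) - k)
          else Am i j * Gam ((n : ℤ) - j) ((n : ℤ) - k))
        = ∑ j ∈ Finset.range (n + 1), Ap i j * Gam ((n : ℤ) - j) ((n : ℤ) - k) := by
      exact Finset.sum_congr rfl (fun j _ => if_pos hd)
    rw [rhs1]
    conv_rhs => rw [show n + 1 = k + (m + 1) by omega, Finset.sum_range_add]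
    have zer : ∑ j ∈ Finset.range k, Ap i j * Gam ((n : ℤ) - j) ((n : ℤ) - k) = 0 := by
      refine Finset.sum_eq_zero (fun j hj => ?_)
      have hj' := Finset.mem_range.mp hj
      have : Gam ((n : ℤ) - j) ((n : ℤ) - k) = 0 := by
        unfold Gam
        rw [show (n : ℤ) - (k : ℤ) = ((m : ℕ) : ℤ) by push_cast; omega,
          Cz_big m ((n : ℤ) - j) (by push_cast; omega)]
        norm_num
      rw [this, mul_zero]
    rw [zer, zero_add]
    refine Finset.sum_congr rfl (fun t ht => ?_)
    have ht' := Finset.mem_range.mp ht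
    unfold Ap Gam
    rw [show ((k + t : ℕ) : ℤ) = (k : ℤ) + t by push_cast; ring,
      show (i : ℤ) - ((k : ℤ) + t) = (i : ℤ) - k - t by ring,
      show (n : ℤ) - (k : ℤ) - ((n : ℤ) - ((k : ℤ) + t)) = ((t : ℕ) : ℤ) by push_cast; ring,
      zpow_natCast,
      show (n : ℤ) - (k : ℤ) = ((m : ℕ) : ℤ) by push_cast; omega,
      show (n : ℤ) - ((k : ℤ) + t) = ((m : ℕ) : ℤ) - (t : ℤ) by push_cast; omega,
      Cz_symm]
    ring
  · -- odd case
    have hd2 : d = 2 * n + 1 := by obtain ⟨c, hc⟩ := hd; omega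
    have lhs1 : (∑ j ∈ Finset.range (d + 1),
          (Cz (k : ℤ) ((i : ℤ) - k - j) : ℚ) * (Cz ((d : ℤ) - 2 * k) (j : ℤ) : ℚ) * 2 ^ j)
        = ∑ t ∈ Finset.range (m + 1),
            ((Cz (m : ℤ) (t : ℤ) : ℚ) * 4 ^ t) *
              ((Cz ((k : ℤ) + t) ((i : ℤ) - k - t) : ℚ)
                + 2 * (Cz ((k : ℤ) + t) ((i : ℤ) - k - t - 1) : ℚ)) := by
      calc (∑ j ∈ Finset.range (d + 1),
            (Cz (k : ℤ) ((i : ℤ) - k - j) : ℚ) * (Cz ((d : ℤ) - 2 * k) (j : ℤ) : ℚ) * 2 ^ j)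
          = ∑ j ∈ Finset.range (d + 1), ∑ t ∈ Finset.range (m + 1),
              ((Cz (m : ℤ) (t : ℤ) : ℚ) * 4 ^ t) *
                ((Cz (k : ℤ) ((i : ℤ) - k - j) : ℚ) * (Cz (t : ℤ) ((j : ℤ) - t) : ℚ)
                  + 2 * ((Cz (k : ℤ) ((i : ℤ) - k - j) : ℚ) *
                      (Cz (t : ℤ) ((j : ℤ) - (t + 1)) : ℚ))) := by
            refine Finset.sum_congr rfl (fun j _ => ?_)
            have e : ((d : ℤ) - 2 * k) = ((2 * m + 1 : ℕ) : ℤ) := by push_cast; omega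
            have hl := L3o m (j : ℤ)
            rw [Int.toNat_natCast] at hl
            rw [e, mul_assoc, hl, Finset.mul_sum]
            refine Finset.sum_congr rfl (fun t _ => ?_)
            rw [show (j : ℤ) - (t + 1) = (j : ℤ) - t - 1 by ring]
            ring
        _ = ∑ t ∈ Finset.range (m + 1),
              ((Cz (m : ℤ) (t : ℤ) : ℚ) * 4 ^ t) *
                ((∑ j ∈ Finset.range (d + 1),
                  (Cz (k : ℤ) ((i : ℤ) - k - j) : ℚ) * (Cz (t : ℤ) ((j : ℤ) - t) : ℚ))
                + 2 * ∑ j ∈ Finset.range (d + 1),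
                  (Cz (k : ℤ) ((i : ℤ) - k - j) : ℚ) * (Cz (t : ℤ) ((j : ℤ) - (t + 1)) : ℚ)) := by
            rw [Finset.sum_comm]
            refine Finset.sum_congr rfl (fun t _ => ?_)
            rw [Finset.mul_sum, mul_add, Finset.mul_sum, Finset.mul_sum,
              ← Finset.sum_add_distrib]
            refine Finset.sum_congr rfl (fun j _ => ?_)
            ring
        _ = ∑ t ∈ Finset.range (m + 1),
              ((Cz (m : ℤ) (t : ℤ) : ℚ) * 4 ^ t) *
                ((Cz ((k : ℤ) + t) ((i : ℤ) - k - t) : ℚ)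
                  + 2 * (Cz ((k : ℤ) + t) ((i : ℤ) - k - t - 1) : ℚ)) := by
            refine Finset.sum_congr rfl (fun t ht => ?_)
            have ht' := Finset.mem_range.mp ht
            rw [vand t (t : ℤ) (by positivity) (by push_cast; omega),
              vand t ((t : ℤ) + 1) (by positivity) (by push_cast; omega),
              show (i : ℤ) - k - ((t : ℤ) + 1) = (i : ℤ) - k - t - 1 by ring]
    rw [lhs1]
    have rhs1 : ∑ j ∈ Finset.range (n + 1),
          (if Even d then Ap i j * Gam ((n : ℤ) - j) ((n : ℤ) - k)
          else Am i j * Gam ((n : ℤ) - j) ((n : ℤ) - k))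
        = ∑ j ∈ Finset.range (n + 1), Am i j * Gam ((n : ℤ) - j) ((n : ℤ) - k) := by
      exact Finset.sum_congr rfl (fun j _ => if_neg (Nat.not_even_iff_odd.mpr hd))
    rw [rhs1]
    conv_rhs => rw [show n + 1 = k + (m + 1) by omega, Finset.sum_range_add]
    have zer : ∑ j ∈ Finset.range k, Am i j * Gam ((n : ℤ) - j) ((n : ℤ) - k) = 0 := by
      refine Finset.sum_eq_zero (fun j hj => ?_)
      have hj' := Finset.mem_range.mp hj
      have : Gam ((n : ℤ) - j) ((n : ℤ) - k) = 0 := by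
        unfold Gam
        rw [show (n : ℤ) - (k : ℤ) = ((m : ℕ) : ℤ) by push_cast; omega,
          Cz_big m ((n : ℤ) - j) (by push_cast; omega)]
        norm_num
      rw [this, mul_zero]
    rw [zer, zero_add]
    refine Finset.sum_congr rfl (fun t ht => ?_)
    have ht' := Finset.mem_range.mp ht
    unfold Am Gam
    rw [show ((k + t : ℕ) : ℤ) = (k : ℤ) + t by push_cast; ring,
      show (i : ℤ) - ((k : ℤ) + t) = (i : ℤ) - k - t by ring,
      show (n : ℤ) - (k : ℤ) - ((n : ℤ) - ((k : ℤ) + t)) = ((t : ℕ) : ℤ) by push_cast; ring,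
      zpow_natCast,
      show (n : ℤ) - (k : ℤ) = ((m : ℕ) : ℤ) by push_cast; omega,
      show (n : ℤ) - ((k : ℤ) + t) = ((m : ℕ) : ℤ) - (t : ℤ) by push_cast; omega,
      Cz_symm]
    have pas : Cz ((k : ℤ) + t + 1) ((i : ℤ) - k - t)
        = Cz ((k : ℤ) + t) ((i : ℤ) - k - t) + Cz ((k : ℤ) + t) ((i : ℤ) - k - t - 1) := by
      have e : (k : ℤ) + t = ((k + t : ℕ) : ℤ) := by push_cast; ring
      rw [e, Cz_pascal]
    rw [pas, Int.cast_add]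
    ring
end
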